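/- arXiv:1510.07711 — 2 statements merged into one kernel-verified Lean document; each statement's English description precedes it below -/
import Mathlib

section
/- L¹ bound on the restricted-digit Fourier transform: there exists a constant C_q ∈ [1/log q, 1 + 3/log q] such that sup_{θ∈ℝ} Σ_{0 ≤ a < q^k} |F̂_{q^k}(θ + a/q^k)| ≪ (C_q · q · log q)^k, with implied constant depending only on q. -/
open Finset Real Complex

/-- The Fourier transform `F̂_{q^k}(t) = ∑_{n < q^k} 1_A(n) e(nt)` of the set of
integers whose `k` base-`q` digits (with leading zeros) avoid `a₀`. -/
noncomputable def restrictedFourier (q a0 k : ℕ) (t : ℝ) : ℂ :=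
  ∑ n ∈ Finset.range (q ^ k),
    if ∀ i < k, n / q ^ i % q ≠ a0 then
      Complex.exp (2 * Real.pi * Complex.I * ((n : ℝ) * t)) else 0

noncomputable def efn (x : ℝ) : ℂ := Complex.exp (2 * Real.pi * Complex.I * x)


lemma efn_add (x y : ℝ) : efn (x + y) = efn x * efn y := by
  rw [efn, efn, efn, ← Complex.exp_add]; push_cast; ring_nf

lemma norm_efn (x : ℝ) : ‖efn x‖ = 1 := by
  rw [efn, Complex.norm_exp]; simp

lemma efn_int (n : ℤ) : efn n = 1 := by
  rw [efn, show ((2:ℂ) * (Real.pi:ℝ) * Complex.I * ((n:ℝ):ℂ)) = (n:ℂ) * (2 * (Real.pi:ℝ) * Complex.I) by push_cast; ring]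
  exact Complex.exp_int_mul_two_pi_mul_I n

lemma efn_nat_mul (d : ℕ) (t : ℝ) : efn ((d : ℝ) * t) = efn t ^ d := by
  rw [efn, efn, ← Complex.exp_nat_mul]; push_cast; ring_nf

lemma norm_efn_sub_one (x : ℝ) : ‖efn x - 1‖ = 2 * |Real.sin (Real.pi * x)| := by
  have h0 : efn x = Complex.exp (((2 * Real.pi * x : ℝ) : ℂ) * Complex.I) := by
    rw [efn]; push_cast; ring_nf
  have h1 : efn x - 1 = ((Real.cos (2*Real.pi*x) - 1 : ℝ) : ℂ) + ((Real.sin (2*Real.pi*x) : ℝ) : ℂ) * Complex.I := by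
    rw [h0, Complex.exp_mul_I, ← Complex.ofReal_cos, ← Complex.ofReal_sin]; push_cast; ring
  rw [h1, Complex.norm_add_mul_I]
  have h2 : (Real.cos (2*Real.pi*x) - 1)^2 + (Real.sin (2*Real.pi*x))^2 = (2*|Real.sin (Real.pi*x)|)^2 := by
    have hc : Real.cos (2*Real.pi*x) = 2 * Real.cos (Real.pi*x)^2 - 1 := by
      rw [mul_assoc]; exact Real.cos_two_mul _
    have hs := Real.sin_sq_add_cos_sq (2*Real.pi*x)
    have hs1 := Real.sin_sq_add_cos_sq (Real.pi*x)
    have habs : |Real.sin (Real.pi*x)|^2 = Real.sin (Real.pi*x)^2 := sq_abs _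
    nlinarith [hc, hs, hs1, habs]
  rw [h2, Real.sqrt_sq (by positivity)]

noncomputable def gfun (q a0 : ℕ) (t : ℝ) : ℂ :=
  ∑ d ∈ Finset.range q, if d ≠ a0 then efn ((d:ℝ) * t) else 0

noncomputable def Dfun (q : ℕ) (t : ℝ) : ℂ := ∑ d ∈ Finset.range q, efn ((d:ℝ) * t)

lemma gfun_periodic (q a0 : ℕ) (t : ℝ) (j : ℤ) : gfun q a0 (t + j) = gfun q a0 t := by
  unfold gfun
  refine Finset.sum_congr rfl fun d _ => ?_
  congr 1
  have : (d:ℝ) * (t + j) = (d:ℝ)*t + ((d * j : ℤ) : ℝ) := by push_cast; ring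
  rw [this, efn_add, efn_int, mul_one]

lemma norm_gfun_le (q a0 : ℕ) (ha0 : a0 < q) (t : ℝ) : ‖gfun q a0 t‖ ≤ (q : ℝ) - 1 := by
  unfold gfun
  calc ‖∑ d ∈ Finset.range q, if d ≠ a0 then efn ((d:ℝ) * t) else 0‖
      ≤ ∑ d ∈ Finset.range q, ‖if d ≠ a0 then efn ((d:ℝ) * t) else 0‖ := norm_sum_le _ _
    _ = ∑ d ∈ Finset.range q, ((1:ℝ) - if d = a0 then 1 else 0) := by
        refine Finset.sum_congr rfl fun d _ => ?_
        by_cases h : d = a0 <;> simp [h, norm_efn]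
    _ = (q : ℝ) - 1 := by
        rw [Finset.sum_sub_distrib, Finset.sum_ite_eq' (Finset.range q) a0]
        simp [Finset.mem_range.mpr ha0]

lemma norm_Dfun_le (q : ℕ) (t : ℝ) : ‖Dfun q t‖ ≤ (q : ℝ) := by
  unfold Dfun
  calc ‖∑ d ∈ Finset.range q, efn ((d:ℝ) * t)‖ ≤ ∑ d ∈ Finset.range q, ‖efn ((d:ℝ)*t)‖ := norm_sum_le _ _
    _ = (q:ℝ) := by simp [norm_efn]

lemma gfun_eq (q a0 : ℕ) (ha0 : a0 < q) (t : ℝ) :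
    gfun q a0 t = Dfun q t - efn ((a0:ℝ) * t) := by
  unfold gfun Dfun
  have : ∀ d ∈ Finset.range q, (if d ≠ a0 then efn ((d:ℝ) * t) else 0)
      = efn ((d:ℝ)*t) - (if d = a0 then efn ((d:ℝ)*t) else 0) := by
    intro d _
    by_cases h : d = a0 <;> simp [h]
  rw [Finset.sum_congr rfl this, Finset.sum_sub_distrib, Finset.sum_ite_eq' (Finset.range q) a0]
  simp [Finset.mem_range.mpr ha0]

lemma norm_gfun_le' (q a0 : ℕ) (ha0 : a0 < q) (t : ℝ) :
    ‖gfun q a0 t‖ ≤ ‖Dfun q t‖ + 1 := by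
  rw [gfun_eq q a0 ha0]
  calc ‖Dfun q t - efn ((a0:ℝ)*t)‖ ≤ ‖Dfun q t‖ + ‖efn ((a0:ℝ)*t)‖ := norm_sub_le _ _
    _ = ‖Dfun q t‖ + 1 := by rw [norm_efn]

lemma Dfun_eq (q : ℕ) (t : ℝ) (h : efn t ≠ 1) :
    Dfun q t = (efn ((q:ℝ) * t) - 1) / (efn t - 1) := by
  unfold Dfun
  rw [efn_nat_mul]
  rw [Finset.sum_congr rfl fun d _ => efn_nat_mul d t]
  exact geom_sum_eq h q

lemma rF_eq (q a0 k : ℕ) (t : ℝ) : restrictedFourier q a0 k t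
    = ∑ n ∈ Finset.range (q ^ k), if ∀ i < k, n / q ^ i % q ≠ a0 then efn ((n:ℝ) * t) else 0 := by
  unfold restrictedFourier efn
  norm_num

lemma rF_periodic (q a0 k : ℕ) (t : ℝ) (j : ℤ) :
    restrictedFourier q a0 k (t + j) = restrictedFourier q a0 k t := by
  rw [rF_eq, rF_eq]
  refine Finset.sum_congr rfl fun n _ => ?_
  congr 1
  have : (n:ℝ) * (t + j) = (n:ℝ)*t + ((n * j : ℤ) : ℝ) := by push_cast; ring
  rw [this, efn_add, efn_int, mul_one]

lemma rF_succ (q a0 k : ℕ) (hq : 0 < q) (t : ℝ) :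
    restrictedFourier q a0 (k+1) t = gfun q a0 t * restrictedFourier q a0 k ((q:ℝ) * t) := by
  rw [rF_eq, rF_eq, gfun, Finset.sum_mul_sum]
  rw [show q ^ (k+1) = q * q^k from pow_succ' q k]
  rw [← Finset.sum_product']
  apply Finset.sum_nbij' (i := fun m => ((m % q, m / q) : ℕ × ℕ)) (j := fun p => p.1 + q * p.2)
  · intro m hm
    simp only [Finset.mem_range] at hm
    simp only [Finset.mem_product, Finset.mem_range]
    exact ⟨Nat.mod_lt _ hq, Nat.div_lt_of_lt_mul hm⟩
  · intro p hp
    simp only [Finset.mem_product, Finset.mem_range] at hp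
    simp only [Finset.mem_range]
    calc p.1 + q * p.2 < q + q * p.2 := by omega
      _ ≤ q * (p.2 + 1) := by ring_nf; omega
      _ ≤ q * q^k := by
          have : p.2 + 1 ≤ q^k := hp.2
          exact Nat.mul_le_mul_left _ this
  · intro m _
    simp only
    exact Nat.mod_add_div m q
  · intro p hp
    simp only [Finset.mem_product, Finset.mem_range] at hp
    have h1 : (p.1 + q * p.2) % q = p.1 := by
      rw [Nat.add_mul_mod_self_left, Nat.mod_eq_of_lt hp.1]
    have h2 : (p.1 + q * p.2) / q = p.2 := by
      rw [Nat.add_mul_div_left _ _ hq, Nat.div_eq_of_lt hp.1, Nat.zero_add]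
    simp [h1, h2]
  · intro m hm
    simp only [Finset.mem_range] at hm
    set d := m % q with hd
    set n' := m / q with hn'
    have hmd : m = d + q * n' := by rw [hd, hn', Nat.mod_add_div]
    have hdlt : d < q := Nat.mod_lt _ hq
    have hcond : (∀ i < k+1, m / q ^ i % q ≠ a0) ↔ (d ≠ a0 ∧ ∀ i < k, n' / q ^ i % q ≠ a0) := by
      constructor
      · intro h
        refine ⟨by simpa using h 0 (Nat.succ_pos k), fun i hi => ?_⟩
        have := h (i+1) (by omega)
        rwa [pow_succ', ← Nat.div_div_eq_div_mul] at this
      · rintro ⟨h0, h⟩ i hi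
        match i with
        | 0 => simpa using h0
        | (i+1) =>
          rw [pow_succ', ← Nat.div_div_eq_div_mul]
          exact h i (by omega)
    have hexp : efn ((m:ℝ) * t) = efn ((d:ℝ)*t) * efn ((n':ℝ) * ((q:ℝ)*t)) := by
      rw [← efn_add]
      congr 1
      rw [hmd]; push_cast; ring
    by_cases h0 : d ≠ a0
    · by_cases h : ∀ i < k, n' / q ^ i % q ≠ a0
      · rw [if_pos (hcond.mpr ⟨h0, h⟩), if_pos h0, if_pos h, hexp]
      · rw [if_neg (fun hP => h (hcond.mp hP).2), if_neg h, mul_zero]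
    · rw [if_neg (fun hP => h0 (hcond.mp hP).1), if_neg h0, zero_mul]

lemma log_ge_one {q : ℕ} (hq : 3 ≤ q) : 1 ≤ Real.log q := by
  have hq0 : (0:ℝ) < q := by positivity
  rw [Real.le_log_iff_exp_le hq0]
  calc Real.exp 1 ≤ 2.7182818286 := le_of_lt Real.exp_one_lt_d9
    _ ≤ 3 := by norm_num
    _ ≤ (q:ℝ) := by exact_mod_cast hq

lemma harmonic_bound (M : ℕ) (hM : 2 ≤ M) :
    ∑ j ∈ Finset.Icc 1 M, (1/(j:ℝ)) ≤ Real.log M + 81/100 := by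
  induction M, hM using Nat.le_induction with
  | base =>
    have h2 : (0.6931471803 : ℝ) < Real.log 2 := Real.log_two_gt_d9
    have : Finset.Icc 1 2 = ({1, 2} : Finset ℕ) := by decide
    rw [this]
    norm_num
    nlinarith
  | succ M hM ih =>
    rw [Finset.sum_Icc_succ_top (by omega)]
    have hM0 : (0:ℝ) < M := by positivity
    have hM1 : (0:ℝ) < (M:ℝ) + 1 := by positivity
    have h1 : Real.log ((M:ℝ)/((M:ℝ)+1)) ≤ (M:ℝ)/((M:ℝ)+1) - 1 := Real.log_le_sub_one_of_pos (by positivity)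
    rw [Real.log_div (ne_of_gt hM0) (ne_of_gt hM1)] at h1
    have h2 : (M:ℝ)/((M:ℝ)+1) - 1 = -(1/((M:ℝ)+1)) := by field_simp; ring
    rw [h2] at h1
    push_cast
    push_cast at ih
    linarith

lemma jord (t : ℝ) (h0 : 0 ≤ t) (h1 : t ≤ 1) : 2 * min t (1 - t) ≤ Real.sin (Real.pi * t) := by
  have key : ∀ s : ℝ, 0 ≤ s → s ≤ 1/2 → 2*s ≤ Real.sin (Real.pi * s) := by
    intro s hs hs'
    have hpi := Real.pi_pos
    have := Real.mul_le_sin (x := Real.pi * s) (by positivity) (by nlinarith)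
    have heq : 2 / Real.pi * (Real.pi * s) = 2 * s := by
      field_simp
    linarith [heq ▸ this]
  rcases le_total t (1/2) with h | h
  · calc 2 * min t (1-t) ≤ 2 * t := by
          have : min t (1-t) ≤ t := min_le_left _ _
          linarith
      _ ≤ Real.sin (Real.pi * t) := key t h0 h
  · have hs : Real.sin (Real.pi * t) = Real.sin (Real.pi * (1 - t)) := by
      rw [show Real.pi * (1 - t) = Real.pi - Real.pi * t by ring, Real.sin_pi_sub]
    calc 2 * min t (1-t) ≤ 2 * (1-t) := by
          have : min t (1-t) ≤ 1-t := min_le_right _ _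
          linarith
      _ ≤ Real.sin (Real.pi * (1-t)) := key (1-t) (by linarith) (by linarith)
      _ = Real.sin (Real.pi * t) := hs.symm

set_option maxHeartbeats 1000000 in
lemma endpoint_sin (q : ℕ) (hq6 : 6 ≤ q) (x : ℝ) (hx1 : 1/(2*(q:ℝ)) ≤ x) (hx2 : x ≤ 1/(q:ℝ)) :
    10/(7*(q:ℝ)) ≤ Real.sin (Real.pi * x) := by
  have hqR : (6:ℝ) ≤ (q:ℝ) := by exact_mod_cast hq6
  have hq0 : (0:ℝ) < q := by linarith
  have hpi := Real.pi_pos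
  have hpi4 : Real.pi ≤ 3.15 := le_of_lt Real.pi_lt_d2
  have hpig : 3.141592 < Real.pi := Real.pi_gt_d6
  have hx0 : 0 < x := lt_of_lt_of_le (by positivity) hx1
  have hy1 : Real.pi * x ≤ 1 := by
    have h1 : Real.pi * x ≤ Real.pi * (1/q) := mul_le_mul_of_nonneg_left hx2 hpi.le
    have hinv : (1:ℝ)/q ≤ 1/6 := by
      apply div_le_div_of_nonneg_left (by norm_num) (by norm_num) hqR
    have h2 : Real.pi * (1/q) ≤ 3.15 * (1/6) :=
      mul_le_mul hpi4 hinv (by positivity) (by norm_num)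
    nlinarith
  have cube : Real.pi * x - (Real.pi * x)^3/4 < Real.sin (Real.pi * x) := by have := Real.sin_gt_sub_cube (by positivity : 0 < Real.pi * x); nlinarith [pow_pos (by positivity : 0 < Real.pi * x) 3]
  set y0 : ℝ := Real.pi/(2*q) with hy0
  have hy0pos : 0 < y0 := by positivity
  have hy0le : y0 ≤ Real.pi * x := by
    rw [hy0, div_eq_mul_inv]
    calc Real.pi * (2*(q:ℝ))⁻¹ = Real.pi * (1/(2*q)) := by ring
      _ ≤ Real.pi * x := by nlinarith
  have mono : y0 - y0^3/4 ≤ Real.pi * x - (Real.pi * x)^3/4 := by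
    have hfac : (Real.pi * x - (Real.pi*x)^3/4) - (y0 - y0^3/4)
        = (Real.pi*x - y0) * (1 - ((Real.pi*x)^2 + (Real.pi*x)*y0 + y0^2)/4) := by ring
    have hb1 : (Real.pi*x)^2 ≤ 1 := by nlinarith
    have hb2 : (Real.pi*x)*y0 ≤ 1 := by nlinarith
    have hb3 : y0^2 ≤ 1 := by nlinarith
    nlinarith [mul_nonneg (sub_nonneg.2 hy0le) (by linarith : (0:ℝ) ≤ 1 - ((Real.pi*x)^2 + (Real.pi*x)*y0 + y0^2)/4)]
  have final : 10/(7*(q:ℝ)) ≤ y0 - y0^3/4 := by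
    rw [hy0, div_le_iff₀ (by positivity : (0:ℝ) < 7*(q:ℝ))]
    have hq2 : (36:ℝ) ≤ (q:ℝ)^2 := by nlinarith
    have e1 : (Real.pi/(2*(q:ℝ)) - (Real.pi/(2*q))^3/4) * (7*q) = 7*Real.pi/2 - 7*Real.pi^3/(32*(q:ℝ)^2) := by
      field_simp; ring
    rw [e1]
    have h3 : 7*Real.pi^3/(32*(q:ℝ)^2) ≤ 7*(3.15)^3/(32*36) := by
      apply div_le_div₀ (by positivity) (by nlinarith [pow_le_pow_left₀ hpi.le hpi4 3]) (by norm_num) (by nlinarith)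
    have hc : (7*(3.15:ℝ)^3/(32*36)) ≤ 0.19 := by norm_num
    linarith
  linarith

lemma mid_sum (q : ℕ) (hq : 6 ≤ q) :
    ∑ c ∈ Finset.Ico 1 (q-1), (1 / ((min c (q-1-c) : ℕ) : ℝ))
      ≤ 2 * (Real.log q - Real.log 2 + 81/100) := by
  set M := (q-1)/2 with hM
  have hM2 : 2 ≤ M := by omega
  have step1 : ∑ c ∈ Finset.Ico 1 (q-1), (1 / ((min c (q-1-c) : ℕ) : ℝ))
      ≤ 2 * ∑ j ∈ Finset.Icc 1 M, (1/(j:ℝ)) := by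
    have hsplit : ∀ c ∈ Finset.Ico 1 (q-1), (1 / ((min c (q-1-c) : ℕ) : ℝ))
        ≤ (if c ≤ q-1-c then (1/(c:ℝ)) else 0) + (if ¬ (c ≤ q-1-c) then (1/((q-1-c:ℕ):ℝ)) else 0) := by
      intro c hc
      by_cases h : c ≤ q-1-c
      · rw [if_pos h, if_neg (not_not_intro h), add_zero, min_eq_left h]
      · rw [if_neg h, if_pos h, zero_add, min_eq_right (by omega : q-1-c ≤ c)]
    calc ∑ c ∈ Finset.Ico 1 (q-1), (1 / ((min c (q-1-c) : ℕ) : ℝ))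
        ≤ ∑ c ∈ Finset.Ico 1 (q-1), ((if c ≤ q-1-c then (1/(c:ℝ)) else 0)
            + (if ¬ (c ≤ q-1-c) then (1/((q-1-c:ℕ):ℝ)) else 0)) := Finset.sum_le_sum hsplit
      _ = (∑ c ∈ Finset.Ico 1 (q-1), if c ≤ q-1-c then (1/(c:ℝ)) else 0)
            + (∑ c ∈ Finset.Ico 1 (q-1), if ¬ (c ≤ q-1-c) then (1/((q-1-c:ℕ):ℝ)) else 0) :=
          Finset.sum_add_distrib
      _ ≤ (∑ j ∈ Finset.Icc 1 M, (1/(j:ℝ))) + (∑ j ∈ Finset.Icc 1 M, (1/(j:ℝ))) := by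
          gcongr ?_ + ?_
          · rw [← Finset.sum_filter]
            apply Finset.sum_le_sum_of_subset_of_nonneg
            · intro c hc
              simp only [Finset.mem_filter, Finset.mem_Ico] at hc
              simp only [Finset.mem_Icc]
              omega
            · intro j _ _
              positivity
          · rw [← Finset.sum_filter]
            rw [Finset.sum_nbij' (i := fun c => q-1-c) (j := fun j => q-1-j)
                (t := Finset.filter (fun j => M < q-1-j) (Finset.Icc 1 M))
                (g := fun j => (1/(j:ℝ)))]
            · apply Finset.sum_le_sum_of_subset_of_nonneg (Finset.filter_subset _ _)
              intro j _ _
              positivity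
            · intro c hc
              simp only [Finset.mem_filter, Finset.mem_Ico] at hc
              simp only [Finset.mem_filter, Finset.mem_Icc]
              omega
            · intro j hj
              simp only [Finset.mem_filter, Finset.mem_Icc] at hj
              simp only [Finset.mem_filter, Finset.mem_Ico]
              omega
            · intro c hc
              simp only [Finset.mem_filter, Finset.mem_Ico] at hc
              omega
            · intro j hj
              simp only [Finset.mem_filter, Finset.mem_Icc] at hj
              omega
            · intro c hc
              rfl
      _ = 2 * ∑ j ∈ Finset.Icc 1 M, (1/(j:ℝ)) := by ring
  have step2 : ∑ j ∈ Finset.Icc 1 M, (1/(j:ℝ)) ≤ Real.log q - Real.log 2 + 81/100 := by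
    have h1 := harmonic_bound M hM2
    have h2 : Real.log M ≤ Real.log ((q:ℝ)/2) := by
      apply Real.log_le_log (by positivity)
      have h3 : 2*M + 1 ≤ q := by omega
      have h4 := (Nat.cast_le (α := ℝ)).mpr h3
      push_cast at h4
      linarith
    rw [Real.log_div (by positivity) (by norm_num)] at h2
    linarith
  linarith

lemma reindex (q a0 : ℕ) (hq : 0 < q) (φ : ℝ) :
    ∑ b ∈ Finset.range q, ‖gfun q a0 (φ + (b:ℝ)/q)‖
      = ∑ c ∈ Finset.range q, ‖gfun q a0 (Int.fract ((q:ℝ)*φ)/q + (c:ℝ)/q)‖ := by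
  set m : ℤ := ⌊(q:ℝ)*φ⌋ with hm
  set ρ : ℝ := Int.fract ((q:ℝ)*φ) with hρ
  have hQ : (0:ℤ) < (q:ℤ) := by exact_mod_cast hq
  have hqR : (0:ℝ) < (q:ℝ) := by exact_mod_cast hq
  apply Finset.sum_nbij' (fun (b : ℕ) => (((b:ℤ) + m) % (q:ℤ)).toNat)
      (fun (c : ℕ) => (((c:ℤ) - m) % (q:ℤ)).toNat)
  · intro b _
    have h0 := Int.emod_nonneg ((b:ℤ) + m) (ne_of_gt hQ)
    have h1 := Int.emod_lt_of_pos ((b:ℤ) + m) hQ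
    simp only [Finset.mem_range]
    omega
  · intro c _
    have h0 := Int.emod_nonneg ((c:ℤ) - m) (ne_of_gt hQ)
    have h1 := Int.emod_lt_of_pos ((c:ℤ) - m) hQ
    simp only [Finset.mem_range]
    omega
  · intro b hb
    simp only [Finset.mem_range] at hb
    have h0 := Int.emod_nonneg ((b:ℤ) + m) (ne_of_gt hQ)
    have e0 : (((((b:ℤ) + m) % (q:ℤ)).toNat : ℤ)) = ((b:ℤ) + m) % (q:ℤ) := Int.toNat_of_nonneg h0
    have e1 : (((b:ℤ) + m) % (q:ℤ) - m) % (q:ℤ) = (b:ℤ) % (q:ℤ) := by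
      conv_rhs => rw [show (b:ℤ) = (b:ℤ) + m - m by ring]
      rw [Int.sub_emod, Int.sub_emod ((b:ℤ)+m) m, Int.emod_emod_of_dvd _ dvd_rfl]
    have e2 : (b:ℤ) % (q:ℤ) = (b:ℤ) := Int.emod_eq_of_lt (by positivity) (by exact_mod_cast hb)
    rw [e0, e1, e2]
    exact Int.toNat_natCast b
  · intro c hc
    simp only [Finset.mem_range] at hc
    have h0 := Int.emod_nonneg ((c:ℤ) - m) (ne_of_gt hQ)
    have e0 : (((((c:ℤ) - m) % (q:ℤ)).toNat : ℤ)) = ((c:ℤ) - m) % (q:ℤ) := Int.toNat_of_nonneg h0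
    have e1 : (((c:ℤ) - m) % (q:ℤ) + m) % (q:ℤ) = (c:ℤ) % (q:ℤ) := by
      conv_rhs => rw [show (c:ℤ) = (c:ℤ) - m + m by ring]
      rw [Int.add_emod, Int.add_emod ((c:ℤ)-m) m, Int.emod_emod_of_dvd _ dvd_rfl]
    have e2 : (c:ℤ) % (q:ℤ) = (c:ℤ) := Int.emod_eq_of_lt (by positivity) (by exact_mod_cast hc)
    rw [e0, e1, e2]
    exact Int.toNat_natCast c
  · intro b _
    set j : ℤ := ((b:ℤ) + m) / (q:ℤ) with hj
    set c' : ℤ := ((b:ℤ) + m) % (q:ℤ) with hc'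
    have h0 := Int.emod_nonneg ((b:ℤ) + m) (ne_of_gt hQ)
    have hint : (q:ℤ) * j + c' = (b:ℤ) + m := Int.mul_ediv_add_emod _ _
    have hfl : (m:ℝ) + ρ = (q:ℝ)*φ := by
      rw [hm, hρ]
      exact_mod_cast Int.floor_add_fract ((q:ℝ)*φ)
    have hcast : (q:ℝ) * (j:ℝ) + ((c'.toNat : ℕ):ℝ) = (b:ℝ) + (m:ℝ) := by
      have hthis := congrArg (Int.cast : ℤ → ℝ) hint
      push_cast at hthis
      have hnn : ((c'.toNat:ℕ):ℝ) = (c':ℝ) := by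
        rw [show ((c'.toNat:ℕ):ℝ) = (((c'.toNat:ℕ):ℤ):ℝ) by push_cast; ring, Int.toNat_of_nonneg h0]
      rw [hnn]
      exact hthis
    have key : φ + (b:ℝ)/q = (ρ/q + ((c'.toNat:ℕ):ℝ)/q) + (j:ℤ) := by
      field_simp
      nlinarith [hfl, hcast]
    rw [key, gfun_periodic]

lemma Dnorm (q : ℕ) (hq : 0 < q) (t ρ : ℝ) (c : ℕ) (ht0 : 0 < t) (ht1 : t < 1)
    (hρ0 : 0 ≤ ρ) (hρ1 : ρ ≤ 1) (hqt : (q:ℝ)*t = ρ + c) :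
    ‖Dfun q t‖ = Real.sin (Real.pi*ρ) / Real.sin (Real.pi*t) := by
  have hpi := Real.pi_pos
  have hsin : 0 < Real.sin (Real.pi*t) :=
    Real.sin_pos_of_pos_of_lt_pi (by positivity) (by nlinarith)
  have hne : efn t ≠ 1 := by
    intro h
    have h2 := norm_efn_sub_one t
    rw [h, sub_self, norm_zero] at h2
    have : |Real.sin (Real.pi*t)| = Real.sin (Real.pi*t) := abs_of_pos hsin
    rw [this] at h2
    linarith
  have hnum : efn ((q:ℝ)*t) = efn ρ := by
    rw [hqt, show ρ + (c:ℝ) = ρ + (((c:ℤ)):ℝ) by push_cast; ring, efn_add, efn_int, mul_one]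
  rw [Dfun_eq q t hne, norm_div, hnum, norm_efn_sub_one, norm_efn_sub_one]
  rw [_root_.abs_of_nonneg (Real.sin_nonneg_of_nonneg_of_le_pi (by positivity) (by nlinarith : Real.pi * ρ ≤ Real.pi)),
    _root_.abs_of_pos hsin]
  rw [mul_div_mul_left _ _ (by norm_num : (2:ℝ) ≠ 0)]

set_option maxHeartbeats 1000000 in
lemma gsum_bound (q a0 : ℕ) (hq3 : 3 ≤ q) (ha0 : a0 < q) (φ : ℝ) :
    ∑ b ∈ Finset.range q, ‖gfun q a0 (φ + (b:ℝ)/q)‖ ≤ q * (Real.log q + 3) := by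
  have hq0 : 0 < q := by omega
  have hqR : (0:ℝ) < q := by exact_mod_cast hq0
  have hlog1 : 1 ≤ Real.log q := log_ge_one hq3
  by_cases hsmall : q ≤ 5
  · calc ∑ b ∈ Finset.range q, ‖gfun q a0 (φ + (b:ℝ)/q)‖
        ≤ ∑ _b ∈ Finset.range q, ((q:ℝ) - 1) :=
          Finset.sum_le_sum fun b _ => norm_gfun_le q a0 ha0 _
      _ = (q:ℝ) * ((q:ℝ) - 1) := by
          rw [Finset.sum_const, Finset.card_range]; ring
      _ ≤ (q:ℝ) * (Real.log q + 3) := by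
          have h5 : (q:ℝ) ≤ 5 := by exact_mod_cast hsmall
          nlinarith
  · push_neg at hsmall
    have hq6 : 6 ≤ q := hsmall
    have hq6R : (6:ℝ) ≤ q := by exact_mod_cast hq6
    rw [reindex q a0 hq0 φ]
    set ρ : ℝ := Int.fract ((q:ℝ)*φ) with hρdef
    have hρ0 : 0 ≤ ρ := Int.fract_nonneg _
    have hρ1 : ρ < 1 := Int.fract_lt_one _
    set Sv : ℝ := Real.sin (Real.pi*ρ) with hSv
    have hpi := Real.pi_pos
    have hSv0 : 0 ≤ Sv := Real.sin_nonneg_of_nonneg_of_le_pi (by positivity) (by nlinarith)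
    have hSv1 : Sv ≤ 1 := Real.sin_le_one _
    set f : ℕ → ℝ := fun c => ‖Dfun q (ρ/q + (c:ℝ)/q)‖ with hf
    have hstep1 : ∑ c ∈ Finset.range q, ‖gfun q a0 (ρ/q + (c:ℝ)/q)‖
        ≤ (∑ c ∈ Finset.range q, f c) + q := by
      calc ∑ c ∈ Finset.range q, ‖gfun q a0 (ρ/q + (c:ℝ)/q)‖
          ≤ ∑ c ∈ Finset.range q, (f c + 1) :=
            Finset.sum_le_sum fun c _ => norm_gfun_le' q a0 ha0 _
        _ = (∑ c ∈ Finset.range q, f c) + q := by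
            rw [Finset.sum_add_distrib, Finset.sum_const, Finset.card_range]; simp
    obtain ⟨Q, hQ⟩ : ∃ Q, q = Q + 2 := ⟨q - 2, by omega⟩
    have hsplit : ∑ c ∈ Finset.range q, f c
        = f 0 + (∑ i ∈ Finset.range Q, f (i+1)) + f (q-1) := by
      rw [hQ, Finset.sum_range_succ, Finset.sum_range_succ']
      have h1 : Q + 2 - 1 = Q + 1 := by omega
      rw [h1]; ring
    -- middle terms
    have hmid : ∀ i ∈ Finset.range Q, f (i+1)
        ≤ Sv * ((q:ℝ)/2) * (1 / ((min (i+1) (q-1-(i+1)) : ℕ) : ℝ)) := by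
      intro i hi
      rw [Finset.mem_range] at hi
      have hc1 : 1 ≤ i + 1 := by omega
      have hcq : i + 1 ≤ q - 2 := by omega
      set c : ℕ := i + 1 with hc
      set t : ℝ := ρ/q + (c:ℝ)/q with ht
      have hcR : (1:ℝ) ≤ (c:ℝ) := by exact_mod_cast hc1
      have hcR2 : (c:ℝ) ≤ (q:ℝ) - 2 := by
        have h1 : c + 2 ≤ q := by omega
        have h2 : ((c:ℝ)) + 2 ≤ (q:ℝ) := by exact_mod_cast h1
        linarith
      have ht0 : 0 < t := by
        have : (0:ℝ) < (c:ℝ)/q := by positivity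
        have h2 : (0:ℝ) ≤ ρ/q := by positivity
        rw [ht]; linarith
      have ht1 : t < 1 := by
        rw [ht, ← add_div, div_lt_one hqR]; linarith
      have hqt : (q:ℝ)*t = ρ + c := by rw [ht]; field_simp
      have hDeq : f c = Sv / Real.sin (Real.pi * t) :=
        Dnorm q hq0 t ρ c ht0 ht1 hρ0 (le_of_lt hρ1) hqt
      set μ : ℕ := min c (q-1-c) with hμ
      have hμ1 : 1 ≤ μ := by omega
      have hμR : (1:ℝ) ≤ (μ:ℝ) := by exact_mod_cast hμ1
      have hcast : ((q-1-c:ℕ):ℝ) = (q:ℝ) - 1 - (c:ℝ) := by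
        have h1 : q - 1 - c + (1 + c) = q := by omega
        have h2 : (((q-1-c:ℕ)):ℝ) + (1 + (c:ℝ)) = (q:ℝ) := by exact_mod_cast congrArg (Nat.cast : ℕ → ℝ) h1
        linarith
      have hμc : (μ:ℝ) ≤ (c:ℝ) := by exact_mod_cast Nat.min_le_left c (q-1-c)
      have hμd : (μ:ℝ) ≤ (q:ℝ) - 1 - (c:ℝ) := by
        rw [← hcast]; exact_mod_cast Nat.min_le_right c (q-1-c)
      have hμlt : (μ:ℝ)/q ≤ min t (1-t) := by
        apply le_min
        · rw [ht, ← add_div]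
          exact div_le_div_of_nonneg_right (by linarith) hqR.le
        · have h1 : (μ:ℝ)/q ≤ ((q:ℝ)-1-(c:ℝ))/q := div_le_div_of_nonneg_right hμd hqR.le
          have e : 1 - t = ((q:ℝ) - ρ - (c:ℝ))/q := by
            rw [ht]; field_simp; ring
          have h2 : ((q:ℝ)-1-(c:ℝ))/q ≤ ((q:ℝ) - ρ - (c:ℝ))/q :=
            div_le_div_of_nonneg_right (by linarith) hqR.le
          rw [e]
          linarith
      have hsinlb : 2*((μ:ℝ)/q) ≤ Real.sin (Real.pi * t) := by
        have := jord t ht0.le ht1.le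
        linarith [hμlt]
      have hfin : f c ≤ Sv / (2*((μ:ℝ)/q)) := by
        rw [hDeq]
        exact div_le_div_of_nonneg_left hSv0 (by positivity) hsinlb
      have heq2 : Sv / (2*((μ:ℝ)/q)) = Sv * ((q:ℝ)/2) * (1/(μ:ℝ)) := by
        field_simp
      rw [heq2] at hfin
      exact hfin
    have hmidsum : ∑ i ∈ Finset.range Q, f (i+1)
        ≤ Sv * ((q:ℝ)/2) * ∑ c ∈ Finset.Ico 1 (q-1), (1 / ((min c (q-1-c) : ℕ) : ℝ)) := by
      have hre : ∑ c ∈ Finset.Ico 1 (q-1), (1 / ((min c (q-1-c) : ℕ) : ℝ))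
          = ∑ i ∈ Finset.range Q, (1 / ((min (i+1) (q-1-(i+1)) : ℕ) : ℝ)) := by
        rw [Finset.sum_Ico_eq_sum_range]
        have h1 : q - 1 - 1 = Q := by omega
        rw [h1]
        exact Finset.sum_congr rfl fun i _ => by rw [Nat.add_comm]
      rw [hre, Finset.mul_sum]
      exact Finset.sum_le_sum hmid
    have hmid2 : ∑ i ∈ Finset.range Q, f (i+1) ≤ (q:ℝ) * (Real.log q - Real.log 2 + 81/100) := by
      have h1 := mid_sum q hq6
      have hlog2 : Real.log 2 ≤ 1 := by
        have := Real.log_le_sub_one_of_pos (by norm_num : (0:ℝ) < 2)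
        linarith
      have hpos : (0:ℝ) ≤ Real.log q - Real.log 2 + 81/100 := by linarith
      have hsum_nonneg : (0:ℝ) ≤ ∑ c ∈ Finset.Ico 1 (q-1), (1 / ((min c (q-1-c) : ℕ) : ℝ)) := by
        apply Finset.sum_nonneg
        intro c _
        positivity
      calc ∑ i ∈ Finset.range Q, f (i+1)
          ≤ Sv * ((q:ℝ)/2) * ∑ c ∈ Finset.Ico 1 (q-1), (1 / ((min c (q-1-c) : ℕ) : ℝ)) := hmidsum
        _ ≤ 1 * ((q:ℝ)/2) * (2 * (Real.log q - Real.log 2 + 81/100)) := by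
            apply mul_le_mul
            · apply mul_le_mul hSv1 (le_refl _) (by positivity) (by norm_num)
            · exact h1
            · exact hsum_nonneg
            · positivity
        _ = (q:ℝ) * (Real.log q - Real.log 2 + 81/100) := by ring
    -- endpoints
    have hend : f 0 + f (q-1) ≤ (q:ℝ) + (7/10)*(q:ℝ) := by
      have hfq : (10:ℝ)/(7*q) > 0 := by positivity
      by_cases hτ : 1/(2*(q:ℝ)) ≤ ρ/q
      · -- f 0 refined, f (q-1) trivial
        have hρpos : 0 < ρ/q := lt_of_lt_of_le (by positivity) hτ
        have harg : ρ/q + ((0:ℕ):ℝ)/q = ρ/q := by norm_num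
        have ht1' : ρ/q < 1 := by
          rw [div_lt_one hqR]; linarith
        have hD0 : f 0 = Sv / Real.sin (Real.pi * (ρ/q)) := by
          have := Dnorm q hq0 (ρ/q) ρ 0 hρpos ht1' hρ0 hρ1.le (by push_cast; field_simp; simp)
          simpa [hf, harg] using this
        have hsin := endpoint_sin q hq6 (ρ/q) hτ (by
          apply div_le_div_of_nonneg_right hρ1.le hqR.le |>.trans
          exact le_of_eq (by norm_num))
        have h0b : f 0 ≤ Sv / (10/(7*(q:ℝ))) := by
          rw [hD0]
          exact div_le_div_of_nonneg_left hSv0 hfq hsin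
        have heq3 : Sv / (10/(7*(q:ℝ))) = Sv * (7*(q:ℝ)/10) := by field_simp
        have h0c : f 0 ≤ (7/10)*(q:ℝ) := by
          rw [heq3] at h0b
          nlinarith
        have h1b : f (q-1) ≤ (q:ℝ) := norm_Dfun_le q _
        linarith
      · push_neg at hτ
        have h0b : f 0 ≤ (q:ℝ) := norm_Dfun_le q _
        set t : ℝ := ρ/q + ((q-1:ℕ):ℝ)/q with ht
        have hcast : ((q-1:ℕ):ℝ) = (q:ℝ) - 1 := by
          have h1 : q - 1 + 1 = q := by omega
          have h2 : ((q-1:ℕ):ℝ) + 1 = (q:ℝ) := by exact_mod_cast congrArg (Nat.cast : ℕ → ℝ) h1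
          linarith
        have ht0 : 0 < t := by
          rw [ht, hcast]
          have : (0:ℝ) < ((q:ℝ)-1)/q := by
            apply div_pos (by linarith) hqR
          have h2 : (0:ℝ) ≤ ρ/q := by positivity
          linarith
        have ht1' : t < 1 := by
          rw [ht, hcast, ← add_div, div_lt_one hqR]; linarith
        have hqt : (q:ℝ)*t = ρ + ((q-1:ℕ):ℝ) := by rw [ht]; field_simp
        have hDq : f (q-1) = Sv / Real.sin (Real.pi * t) :=
          Dnorm q hq0 t ρ (q-1) ht0 ht1' hρ0 hρ1.le hqt
        have hx : 1 - t = (1-ρ)/q := by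
          rw [ht, hcast]; field_simp; ring
        have hsineq : Real.sin (Real.pi * t) = Real.sin (Real.pi * (1-t)) := by
          rw [show Real.pi * (1-t) = Real.pi - Real.pi*t by ring, Real.sin_pi_sub]
        have hsin := endpoint_sin q hq6 (1-t) (by
            rw [hx]
            rw [div_le_div_iff₀ (by positivity) hqR]
            have : ρ < 1/2 := by
              rw [div_lt_div_iff₀ hqR (by positivity : (0:ℝ) < 2*(q:ℝ))] at hτ
              nlinarith
            nlinarith)
          (by
            rw [hx]
            apply div_le_div_of_nonneg_right ?_ hqR.le
            linarith)
        have h1b : f (q-1) ≤ Sv / (10/(7*(q:ℝ))) := by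
          rw [hDq, hsineq]
          exact div_le_div_of_nonneg_left hSv0 hfq hsin
        have heq3 : Sv / (10/(7*(q:ℝ))) = Sv * (7*(q:ℝ)/10) := by field_simp
        have h1c : f (q-1) ≤ (7/10)*(q:ℝ) := by
          rw [heq3] at h1b
          nlinarith
        linarith
    -- combine
    have hlog2' : (0.6931471803:ℝ) < Real.log 2 := Real.log_two_gt_d9
    calc ∑ c ∈ Finset.range q, ‖gfun q a0 (ρ/q + (c:ℝ)/q)‖
        ≤ (∑ c ∈ Finset.range q, f c) + q := hstep1
      _ = f 0 + (∑ i ∈ Finset.range Q, f (i+1)) + f (q-1) + q := by rw [hsplit]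
      _ ≤ ((q:ℝ) + (7/10)*(q:ℝ)) + ((q:ℝ) * (Real.log q - Real.log 2 + 81/100)) + q := by
          linarith [hend, hmid2]
      _ ≤ (q:ℝ) * (Real.log q + 3) := by nlinarith

lemma rF_zero (q a0 : ℕ) (t : ℝ) : restrictedFourier q a0 0 t = 1 := by
  rw [rF_eq]
  simp only [pow_zero, Finset.sum_range_one, Nat.not_lt_zero]
  rw [if_pos (fun i hi => absurd hi (Nat.not_lt_zero i))]
  simpa using efn_int 0

lemma S_bound (q a0 : ℕ) (hq3 : 3 ≤ q) (ha0 : a0 < q) :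
    ∀ (k : ℕ) (θ : ℝ), ∑ a ∈ Finset.range (q^k), ‖restrictedFourier q a0 k (θ + (a:ℝ)/(q:ℝ)^k)‖
      ≤ ((q:ℝ)*(Real.log q + 3))^k := by
  have hq0 : 0 < q := by omega
  have hqR : (0:ℝ) < q := by exact_mod_cast hq0
  have hlog1 : 1 ≤ Real.log q := log_ge_one hq3
  have hM0 : (0:ℝ) ≤ (q:ℝ)*(Real.log q + 3) := by nlinarith
  intro k
  induction k with
  | zero =>
    intro θ
    simp only [pow_zero, Finset.sum_range_one]
    rw [rF_zero]
    norm_num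
  | succ k ih =>
    intro θ
    have hqpow : (0:ℝ) < (q:ℝ)^(k+1) := by positivity
    have hqpowk : (0:ℝ) < (q:ℝ)^k := by positivity
    have key : ∑ a ∈ Finset.range (q^(k+1)), ‖restrictedFourier q a0 (k+1) (θ + (a:ℝ)/(q:ℝ)^(k+1))‖
        = ∑ p ∈ Finset.range (q^k) ×ˢ Finset.range q,
            ‖gfun q a0 ((θ + (p.1:ℝ)/(q:ℝ)^(k+1)) + (p.2:ℝ)/q)‖
              * ‖restrictedFourier q a0 k (((q:ℝ)*θ) + (p.1:ℝ)/(q:ℝ)^k)‖ := by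
      apply Finset.sum_nbij' (fun (a : ℕ) => ((a % q^k, a / q^k) : ℕ × ℕ))
          (fun p => p.1 + q^k * p.2)
      · intro a ha
        simp only [Finset.mem_range] at ha
        simp only [Finset.mem_product, Finset.mem_range]
        constructor
        · exact Nat.mod_lt _ (by positivity)
        · apply Nat.div_lt_of_lt_mul
          calc a < q^(k+1) := ha
            _ = q^k * q := pow_succ q k
      · intro p hp
        simp only [Finset.mem_product, Finset.mem_range] at hp
        simp only [Finset.mem_range]
        calc p.1 + q^k * p.2 < q^k + q^k * p.2 := by omega
          _ ≤ q^k * (p.2 + 1) := by ring_nf; omega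
          _ ≤ q^k * q := Nat.mul_le_mul_left _ hp.2
          _ = q^(k+1) := (pow_succ q k).symm
      · intro a _
        simp only
        exact Nat.mod_add_div a (q^k)
      · intro p hp
        simp only [Finset.mem_product, Finset.mem_range] at hp
        have h1 : (p.1 + q^k * p.2) % q^k = p.1 := by
          rw [Nat.add_mul_mod_self_left, Nat.mod_eq_of_lt hp.1]
        have h2 : (p.1 + q^k * p.2) / q^k = p.2 := by
          rw [Nat.add_mul_div_left _ _ (by positivity : 0 < q^k), Nat.div_eq_of_lt hp.1, Nat.zero_add]
        simp [h1, h2]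
      · intro a ha
        simp only [Finset.mem_range] at ha
        set a' := a % q^k with ha'
        set b := a / q^k with hb
        have hab : a = a' + q^k * b := by rw [ha', hb, Nat.mod_add_div]
        have ha'lt : a' < q^k := Nat.mod_lt _ (by positivity)
        have hblt : b < q := by
          apply Nat.div_lt_of_lt_mul
          calc a < q^(k+1) := ha
            _ = q^k * q := pow_succ q k
        rw [rF_succ q a0 k hq0, norm_mul]
        have harg1 : θ + (a:ℝ)/(q:ℝ)^(k+1) = (θ + (a':ℝ)/(q:ℝ)^(k+1)) + (b:ℝ)/q := by
          have : (a:ℝ) = (a':ℝ) + (q:ℝ)^k * (b:ℝ) := by exact_mod_cast congrArg (Nat.cast : ℕ → ℝ) hab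
          rw [this]
          field_simp
          ring
        have harg2 : (q:ℝ) * ((θ + (a':ℝ)/(q:ℝ)^(k+1)) + (b:ℝ)/q) = (((q:ℝ)*θ) + (a':ℝ)/(q:ℝ)^k) + ((b:ℤ):ℝ) := by
          push_cast
          field_simp
          ring
        rw [harg1, harg2, rF_periodic]
    rw [key, Finset.sum_product]
    have hinner : ∀ a' ∈ Finset.range (q^k),
        (∑ b ∈ Finset.range q, ‖gfun q a0 ((θ + (a':ℝ)/(q:ℝ)^(k+1)) + (b:ℝ)/q)‖
            * ‖restrictedFourier q a0 k (((q:ℝ)*θ) + (a':ℝ)/(q:ℝ)^k)‖)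
          ≤ ((q:ℝ)*(Real.log q + 3)) * ‖restrictedFourier q a0 k (((q:ℝ)*θ) + (a':ℝ)/(q:ℝ)^k)‖ := by
      intro a' _
      rw [← Finset.sum_mul]
      exact mul_le_mul_of_nonneg_right (gsum_bound q a0 hq3 ha0 _) (norm_nonneg _)
    calc ∑ a' ∈ Finset.range (q^k), ∑ b ∈ Finset.range q,
            ‖gfun q a0 ((θ + (a':ℝ)/(q:ℝ)^(k+1)) + (b:ℝ)/q)‖
              * ‖restrictedFourier q a0 k (((q:ℝ)*θ) + (a':ℝ)/(q:ℝ)^k)‖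
        ≤ ∑ a' ∈ Finset.range (q^k),
            ((q:ℝ)*(Real.log q + 3)) * ‖restrictedFourier q a0 k (((q:ℝ)*θ) + (a':ℝ)/(q:ℝ)^k)‖ :=
          Finset.sum_le_sum hinner
      _ = ((q:ℝ)*(Real.log q + 3)) * ∑ a' ∈ Finset.range (q^k),
            ‖restrictedFourier q a0 k (((q:ℝ)*θ) + (a':ℝ)/(q:ℝ)^k)‖ := by
          rw [Finset.mul_sum]
      _ ≤ ((q:ℝ)*(Real.log q + 3)) * ((q:ℝ)*(Real.log q + 3))^k :=
          mul_le_mul_of_nonneg_left (ih ((q:ℝ)*θ)) hM0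
      _ = ((q:ℝ)*(Real.log q + 3))^(k+1) := by rw [pow_succ]; ring

/-- L¹ bound: there exists `C_q ∈ [1/log q, 1 + 3/log q]` such that
`sup_θ ∑_{0 ≤ a < q^k} |F̂_{q^k}(θ + a/q^k)| ≪_q (C_q·q·log q)^k`. -/
theorem restricted_fourier_L1_bound (q a0 : ℕ) (hq : 3 ≤ q) (ha0 : a0 < q) :
    ∃ Cq C : ℝ, 1 / Real.log q ≤ Cq ∧ Cq ≤ 1 + 3 / Real.log q ∧ 0 < C ∧
      ∀ (k : ℕ) (θ : ℝ),
        ∑ a ∈ Finset.range (q ^ k), ‖restrictedFourier q a0 k (θ + (a : ℝ) / (q : ℝ) ^ k)‖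
          ≤ C * (Cq * q * Real.log q) ^ k := by
  have hlog1 : 1 ≤ Real.log q := log_ge_one hq
  have hlogpos : 0 < Real.log q := by linarith
  refine ⟨1 + 3 / Real.log q, 1, ?_, le_refl _, one_pos, ?_⟩
  · have h1 : 1 / Real.log q ≤ 1 := by
      rw [div_le_one hlogpos]; exact hlog1
    have h2 : 0 ≤ 3 / Real.log q := by positivity
    linarith
  · intro k θ
    have hbase : (1 + 3 / Real.log q) * q * Real.log q = q * (Real.log q + 3) := by
      field_simp
    rw [hbase, one_mul]
    exact S_bound q a0 hq ha0 k θ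
end

section
/- Large sieve type estimate: for all θ ∈ ℝ and D ≥ 1, Σ_{D ≤ d < 2D} Σ_{0 < ℓ < d, (ℓ,d)=1} sup_{|ε|<1/(10D²)} |F̂_{q^k}(ℓ/d + θ + ε)| ≪ (D² + q^k)(C_q log q)^k, where C_q is the constant of the L¹ bound. -/
set_option maxHeartbeats 1000000

open Finset Real Complex MeasureTheory

noncomputable def rflsG (q a0 : ℕ) (u : ℝ) : ℂ :=
  ∑ j ∈ (Finset.range q).erase a0,
    Complex.exp (2 * Real.pi * Complex.I * ((j : ℝ) * u))

noncomputable def rflsD (q a0 k : ℕ) (t : ℝ) : ℂ :=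
  ∑ n ∈ Finset.range (q ^ k),
    if ∀ i < k, n / q ^ i % q ≠ a0 then
      (2 * Real.pi * Complex.I * ((n : ℝ) : ℂ)) *
        Complex.exp (2 * Real.pi * Complex.I * ((n : ℝ) * t)) else 0

noncomputable def rflsM (q : ℕ) (u : ℝ) : ℝ :=
  min (q : ℝ) (1 + 1 / (2 * |u - round u|))

noncomputable def rflsGk (q k : ℕ) (t : ℝ) : ℝ :=
  ∏ i ∈ Finset.range k, rflsM q ((q : ℝ) ^ i * t)

lemma rfls_norm_exp (x : ℝ) : ‖Complex.exp (2 * Real.pi * Complex.I * (x : ℂ))‖ = 1 := by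
  have h : 2 * Real.pi * Complex.I * (x : ℂ) = ((2 * Real.pi * x : ℝ) : ℂ) * Complex.I := by
    push_cast; ring
  rw [h, Complex.norm_exp_ofReal_mul_I]

lemma rflsM_nonneg (q : ℕ) (u : ℝ) : 0 ≤ rflsM q u := by
  unfold rflsM
  have h1 : (0:ℝ) ≤ q := Nat.cast_nonneg q
  have h2 : (0:ℝ) ≤ 1 + 1 / (2 * |u - round u|) := by positivity
  exact le_min h1 h2

lemma rflsM_le (q : ℕ) (u : ℝ) : rflsM q u ≤ q := min_le_left _ _

lemma rflsM_one_le (q : ℕ) (hq : 1 ≤ q) (u : ℝ) : 1 ≤ rflsM q u := by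
  unfold rflsM
  have h1 : (1:ℝ) ≤ q := by exact_mod_cast hq
  have h2 : (1:ℝ) ≤ 1 + 1 / (2 * |u - round u|) := by
    have : (0:ℝ) ≤ 1 / (2 * |u - round u|) := by positivity
    linarith
  exact le_min h1 h2

lemma rflsGk_nonneg (q k : ℕ) (t : ℝ) : 0 ≤ rflsGk q k t :=
  Finset.prod_nonneg fun i _ => rflsM_nonneg q _

lemma rflsGk_le (q k : ℕ) (t : ℝ) : rflsGk q k t ≤ (q:ℝ) ^ k := by
  unfold rflsGk
  calc ∏ i ∈ Finset.range k, rflsM q ((q : ℝ) ^ i * t)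
      ≤ ∏ i ∈ Finset.range k, (q:ℝ) :=
        Finset.prod_le_prod (fun i _ => rflsM_nonneg q _) (fun i _ => rflsM_le q _)
    _ = (q:ℝ) ^ k := by simp

lemma rfls_norm_g_le (q a0 : ℕ) (u : ℝ) : ‖rflsG q a0 u‖ ≤ q := by
  unfold rflsG
  calc ‖∑ j ∈ (Finset.range q).erase a0,
        Complex.exp (2 * Real.pi * Complex.I * ((j : ℝ) * u))‖
      ≤ ∑ j ∈ (Finset.range q).erase a0,
          ‖Complex.exp (2 * Real.pi * Complex.I * ((j : ℝ) * u))‖ := norm_sum_le _ _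
    _ = ∑ j ∈ (Finset.range q).erase a0, (1:ℝ) := by
        refine Finset.sum_congr rfl fun j _ => ?_
        exact_mod_cast rfls_norm_exp ((j:ℝ) * u)
    _ ≤ ∑ j ∈ Finset.range q, (1:ℝ) := by
        refine Finset.sum_le_sum_of_subset_of_nonneg (Finset.erase_subset _ _) ?_
        intros; norm_num
    _ = q := by simp

-- sin lower bound
lemma rfls_sin_lb (u : ℝ) : 2 * |u - round u| ≤ |Real.sin (Real.pi * u)| := by
  set v : ℝ := u - round u with hv
  have hv2 : |v| ≤ 1/2 := abs_sub_round u
  have h1 : Real.sin (Real.pi * u) = (-1) ^ (round u) * Real.sin (Real.pi * v) := by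
    have h := Real.sin_add_int_mul_pi (Real.pi * v) (round u)
    rw [← h]; congr 1; rw [hv]; push_cast; ring
  have h2 : |Real.sin (Real.pi * u)| = |Real.sin (Real.pi * v)| := by
    have hone : |((-1:ℝ)) ^ round u| = 1 := by
      rcases Int.even_or_odd (round u) with he | ho
      · rw [he.neg_one_zpow]; norm_num
      · rw [Odd.neg_one_zpow ho]; norm_num
    rw [h1, abs_mul, hone, one_mul]
  rw [h2]
  have h3 : |Real.sin (Real.pi * v)| = Real.sin (Real.pi * |v|) := by
    rcases le_or_gt 0 v with h | h
    · rw [_root_.abs_of_nonneg h, _root_.abs_of_nonneg]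
      apply Real.sin_nonneg_of_nonneg_of_le_pi
      · positivity
      · nlinarith [Real.pi_pos, _root_.abs_of_nonneg h, hv2]
    · rw [abs_of_neg h, show Real.pi * v = -(Real.pi * -v) by ring, Real.sin_neg, abs_neg,
        _root_.abs_of_nonneg]
      apply Real.sin_nonneg_of_nonneg_of_le_pi
      · nlinarith [Real.pi_pos]
      · nlinarith [Real.pi_pos, abs_of_neg h, hv2]
  rw [h3]
  have h4 := Real.mul_le_sin (x := Real.pi * |v|) (by positivity)
    (by nlinarith [Real.pi_pos])
  have hpi := Real.pi_pos
  calc 2 * |v| = 2 / Real.pi * (Real.pi * |v|) := by field_simp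
    _ ≤ Real.sin (Real.pi * |v|) := h4

lemma rfls_norm_z_sub_one (u : ℝ) :
    ‖Complex.exp (2 * Real.pi * Complex.I * (u : ℂ)) - 1‖ = 2 * |Real.sin (Real.pi * u)| := by
  have hz' : Complex.exp (2 * Real.pi * Complex.I * (u : ℂ))
      = Complex.exp ((2 * Real.pi * u : ℝ) * Complex.I) := by congr 1; push_cast; ring
  rw [hz', Complex.norm_def, Complex.normSq_apply]
  simp only [Complex.sub_re, Complex.sub_im, Complex.exp_ofReal_mul_I_re,
    Complex.exp_ofReal_mul_I_im, Complex.one_re, Complex.one_im]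
  have hcos : Real.cos (2 * Real.pi * u) = 1 - 2 * Real.sin (Real.pi * u) ^ 2 := by
    have h := Real.cos_two_mul' (Real.pi * u)
    have hs := Real.sin_sq_add_cos_sq (Real.pi * u)
    rw [show 2 * Real.pi * u = 2 * (Real.pi * u) by ring, h]; linarith
  have hs2 := Real.sin_sq_add_cos_sq (2 * Real.pi * u)
  have key : (Real.cos (2 * Real.pi * u) - 1) * (Real.cos (2 * Real.pi * u) - 1)
        + (Real.sin (2 * Real.pi * u) - 0) * (Real.sin (2 * Real.pi * u) - 0)
      = (2 * |Real.sin (Real.pi * u)|) ^ 2 := by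
    have := _root_.sq_abs (Real.sin (Real.pi * u))
    nlinarith [hcos, hs2]
  rw [key, Real.sqrt_sq (by positivity)]

lemma rfls_norm_g_le_M (q a0 : ℕ) (ha0 : a0 < q) (u : ℝ)
    (hu : u ≠ (round u : ℤ)) : ‖rflsG q a0 u‖ ≤ rflsM q u := by
  refine le_min (rfls_norm_g_le q a0 u) ?_
  have hr0 : (0:ℝ) < |u - round u| := by
    rw [abs_pos, sub_ne_zero]; exact_mod_cast hu
  set z : ℂ := Complex.exp (2 * Real.pi * Complex.I * (u : ℂ)) with hzdef
  have hzpow : ∀ j : ℕ, Complex.exp (2 * Real.pi * Complex.I * ((j : ℝ) * u)) = z ^ j := by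
    intro j
    rw [hzdef, ← Complex.exp_nat_mul]
    congr 1; push_cast; ring
  have hznorm : ‖z‖ = 1 := rfls_norm_exp u
  have hz1 : z ≠ 1 := by
    intro h
    obtain ⟨n, hn⟩ := Complex.exp_eq_one_iff.1 h
    have h2 : (2 * (Real.pi:ℂ) * Complex.I) ≠ 0 := by
      simp [Real.pi_ne_zero, Complex.I_ne_zero]
    have h3 : (u : ℂ) = (n : ℂ) := by
      apply mul_left_cancel₀ h2
      rw [show 2 * (Real.pi:ℂ) * Complex.I * (u:ℂ) = 2 * ↑Real.pi * Complex.I * ↑u by ring, hn]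
      ring
    have h4 : u = (n : ℝ) := by exact_mod_cast h3
    apply hu
    rw [h4]; norm_cast; rw [round_intCast]
  have hsplit : rflsG q a0 u = (∑ j ∈ Finset.range q, z ^ j) - z ^ a0 := by
    unfold rflsG
    have := Finset.add_sum_erase (Finset.range q)
      (fun j => Complex.exp (2 * Real.pi * Complex.I * ((j : ℝ) * u)))
      (Finset.mem_range.2 ha0)
    simp only [hzpow] at this ⊢
    linear_combination this
  have hgeom : ∑ j ∈ Finset.range q, z ^ j = (z ^ q - 1) / (z - 1) := geom_sum_eq hz1 q
  have hzs : ‖z - 1‖ = 2 * |Real.sin (Real.pi * u)| := rfls_norm_z_sub_one u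
  have hzs_pos : (4:ℝ) * |u - round u| ≤ ‖z - 1‖ := by
    rw [hzs]; have := rfls_sin_lb u; linarith
  have hnum : ‖z ^ q - 1‖ ≤ 2 := by
    calc ‖z ^ q - 1‖ ≤ ‖z ^ q‖ + ‖(1:ℂ)‖ := norm_sub_le _ _
      _ = 2 := by rw [norm_pow, hznorm]; norm_num
  have hS : ‖∑ j ∈ Finset.range q, z ^ j‖ ≤ 1 / (2 * |u - round u|) := by
    rw [hgeom, norm_div]
    have hd : (0:ℝ) < ‖z - 1‖ := lt_of_lt_of_le (by linarith) hzs_pos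
    rw [div_le_div_iff₀ hd (by positivity)]
    calc ‖z ^ q - 1‖ * (2 * |u - round u|) ≤ 2 * (2 * |u - round u|) := by
          apply mul_le_mul_of_nonneg_right hnum; positivity
      _ ≤ 1 * ‖z - 1‖ := by rw [one_mul]; linarith
  calc ‖rflsG q a0 u‖ = ‖(∑ j ∈ Finset.range q, z ^ j) - z ^ a0‖ := by rw [hsplit]
    _ ≤ ‖∑ j ∈ Finset.range q, z ^ j‖ + ‖z ^ a0‖ := norm_sub_le _ _
    _ ≤ 1 / (2 * |u - round u|) + 1 := by
        rw [norm_pow, hznorm, one_pow]; linarith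
    _ = 1 + 1 / (2 * |u - round u|) := by ring

lemma rfls_fourier_succ (q a0 : ℕ) (hq : 1 ≤ q) (k : ℕ) (t : ℝ) :
    restrictedFourier q a0 (k+1) t = rflsG q a0 t * restrictedFourier q a0 k ((q:ℝ) * t) := by
  classical
  have hQ : 0 < q := hq
  have hdivq : ∀ p1 p2 : ℕ, p1 < q → (p1 + q * p2) / q = p2 := fun p1 p2 h => by
    rw [Nat.add_mul_div_left _ _ hQ, Nat.div_eq_of_lt h, Nat.zero_add]
  have hmodq : ∀ p1 p2 : ℕ, p1 < q → (p1 + q * p2) % q = p1 := fun p1 p2 h => by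
    rw [Nat.add_mul_mod_self_left, Nat.mod_eq_of_lt h]
  unfold restrictedFourier
  have hsum : ∑ n ∈ Finset.range (q ^ (k+1)),
      (if ∀ i < k+1, n / q ^ i % q ≠ a0 then
        Complex.exp (2 * Real.pi * Complex.I * ((n : ℝ) * t)) else 0)
      = ∑ p ∈ (Finset.range q) ×ˢ (Finset.range (q ^ k)),
      (if ∀ i < k+1, (p.1 + q * p.2) / q ^ i % q ≠ a0 then
        Complex.exp (2 * Real.pi * Complex.I * (((p.1 + q * p.2 : ℕ) : ℝ) * t)) else 0) := by
    apply Finset.sum_nbij' (i := fun n => (n % q, n / q)) (j := fun p => p.1 + q * p.2)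
    · intro n hn
      simp only [Finset.mem_range, Finset.mem_product] at hn ⊢
      constructor
      · exact Nat.mod_lt _ hQ
      · rw [pow_succ'] at hn
        exact Nat.div_lt_of_lt_mul hn
    · intro p hp
      simp only [Finset.mem_range, Finset.mem_product] at hp ⊢
      rw [pow_succ']
      calc p.1 + q * p.2 < q + q * p.2 := by omega
        _ = q * (p.2 + 1) := by ring
        _ ≤ q * q ^ k := Nat.mul_le_mul_left q hp.2
    · intro n _
      exact Nat.mod_add_div n q
    · intro p hp
      simp only [Finset.mem_range, Finset.mem_product] at hp
      have h1 := hmodq p.1 p.2 hp.1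
      have h2 := hdivq p.1 p.2 hp.1
      simp [h1, h2]
    · intro n _
      simp only [Nat.mod_add_div]
  rw [hsum, Finset.sum_product]
  have key : ∀ p1 ∈ Finset.range q, ∀ p2 ∈ Finset.range (q ^ k),
      (if ∀ i < k+1, (p1 + q * p2) / q ^ i % q ≠ a0 then
        Complex.exp (2 * Real.pi * Complex.I * (((p1 + q * p2 : ℕ) : ℝ) * t)) else 0)
      = (if p1 ≠ a0 then Complex.exp (2 * Real.pi * Complex.I * ((p1 : ℝ) * t)) else 0)
        * (if ∀ i < k, p2 / q ^ i % q ≠ a0 then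
            Complex.exp (2 * Real.pi * Complex.I * ((p2 : ℝ) * ((q:ℝ) * t))) else 0) := by
    intro p1 hp1 p2 _
    simp only [Finset.mem_range] at hp1
    have hdiv : ∀ i, (p1 + q * p2) / q ^ (i+1) = p2 / q ^ i := by
      intro i
      rw [pow_succ', ← Nat.div_div_eq_div_mul, hdivq p1 p2 hp1]
    have hmod : (p1 + q * p2) % q = p1 := hmodq p1 p2 hp1
    have hcond : (∀ i < k+1, (p1 + q * p2) / q ^ i % q ≠ a0)
        ↔ (p1 ≠ a0 ∧ ∀ i < k, p2 / q ^ i % q ≠ a0) := by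
      constructor
      · intro h
        refine ⟨?_, fun i hi => ?_⟩
        · have := h 0 (by omega)
          simpa [hmod] using this
        · have := h (i+1) (by omega)
          rwa [hdiv i] at this
      · rintro ⟨h1, h2⟩ i hi
        match i with
        | 0 => simpa [hmod] using h1
        | (i+1) => rw [hdiv i]; exact h2 i (by omega)
    have hexp : Complex.exp (2 * Real.pi * Complex.I * (((p1 + q * p2 : ℕ) : ℝ) * t))
        = Complex.exp (2 * Real.pi * Complex.I * ((p1 : ℝ) * t))
          * Complex.exp (2 * Real.pi * Complex.I * ((p2 : ℝ) * ((q:ℝ) * t))) := by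
      rw [← Complex.exp_add]
      congr 1
      push_cast
      ring
    simp only [hcond, hexp]
    by_cases h1 : p1 ≠ a0 <;> by_cases h2 : (∀ i < k, p2 / q ^ i % q ≠ a0) <;>
      simp [h1, h2]
  calc ∑ p1 ∈ Finset.range q, ∑ p2 ∈ Finset.range (q ^ k),
        (if ∀ i < k+1, (p1 + q * p2) / q ^ i % q ≠ a0 then
          Complex.exp (2 * Real.pi * Complex.I * (((p1 + q * p2 : ℕ) : ℝ) * t)) else 0)
      = ∑ p1 ∈ Finset.range q, ∑ p2 ∈ Finset.range (q ^ k),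
        (if p1 ≠ a0 then Complex.exp (2 * Real.pi * Complex.I * ((p1 : ℝ) * t)) else 0)
        * (if ∀ i < k, p2 / q ^ i % q ≠ a0 then
            Complex.exp (2 * Real.pi * Complex.I * ((p2 : ℝ) * ((q:ℝ) * t))) else 0) := by
        exact Finset.sum_congr rfl fun p1 hp1 => Finset.sum_congr rfl fun p2 hp2 =>
          key p1 hp1 p2 hp2
    _ = (∑ p1 ∈ Finset.range q,
          (if p1 ≠ a0 then Complex.exp (2 * Real.pi * Complex.I * ((p1 : ℝ) * t)) else 0))
        * ∑ p2 ∈ Finset.range (q ^ k),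
          (if ∀ i < k, p2 / q ^ i % q ≠ a0 then
            Complex.exp (2 * Real.pi * Complex.I * ((p2 : ℝ) * ((q:ℝ) * t))) else 0) := by
        rw [Finset.sum_mul]
        exact Finset.sum_congr rfl fun p1 _ => by rw [Finset.mul_sum]
    _ = rflsG q a0 t * ∑ p2 ∈ Finset.range (q ^ k),
          (if ∀ i < k, p2 / q ^ i % q ≠ a0 then
            Complex.exp (2 * Real.pi * Complex.I * ((p2 : ℝ) * ((q:ℝ) * t))) else 0) := by
        congr 1
        rw [Finset.sum_ite, Finset.sum_const_zero, add_zero]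
        unfold rflsG
        apply Finset.sum_congr
        · ext j; simp [Finset.mem_filter, Finset.mem_erase, and_comm]
        · intros; rfl
    _ = rflsG q a0 t * restrictedFourier q a0 k ((q:ℝ) * t) := by
        congr 1
        unfold restrictedFourier
        refine Finset.sum_congr rfl fun n _ => ?_
        refine if_congr Iff.rfl ?_ rfl
        congr 1
        push_cast
        ring

lemma rfls_prod_formula (q a0 : ℕ) (hq : 1 ≤ q) (k : ℕ) :
    ∀ t : ℝ, restrictedFourier q a0 k t = ∏ i ∈ Finset.range k, rflsG q a0 ((q:ℝ)^i * t) := by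
  induction k with
  | zero => intro t; simp [restrictedFourier]
  | succ k ih =>
    intro t
    rw [rfls_fourier_succ q a0 hq k t, ih ((q:ℝ) * t), Finset.prod_range_succ', mul_comm]
    congr 1
    · exact Finset.prod_congr rfl fun i _ => by congr 1; push_cast; ring
    · congr 1; norm_num

-- canonical exponential
lemma rfls_exp_norm_one (C t : ℝ) :
    ‖Complex.exp (2 * Real.pi * Complex.I * (C:ℂ) * (t:ℂ))‖ = 1 := by
  rw [Complex.norm_exp]
  have : (2 * (Real.pi:ℂ) * Complex.I * (C:ℂ) * (t:ℂ)).re = 0 := by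
    simp [Complex.mul_re, Complex.mul_im]
  rw [this, Real.exp_zero]

lemma rfls_norm_pi : ‖(2 * (Real.pi:ℂ) * Complex.I)‖ = 2 * Real.pi := by
  have h : (2 * (Real.pi:ℂ) * Complex.I) = ((2 * Real.pi : ℝ):ℂ) * Complex.I := by
    push_cast; ring
  rw [h, norm_mul, Complex.norm_I, mul_one, Complex.norm_real, Real.norm_eq_abs,
    _root_.abs_of_nonneg (by positivity)]

lemma rfls_hasDerivAt_exp (C t : ℝ) :
    HasDerivAt (fun s : ℝ => Complex.exp (2 * Real.pi * Complex.I * (C:ℂ) * (s:ℂ)))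
      (2 * Real.pi * Complex.I * (C:ℂ) *
        Complex.exp (2 * Real.pi * Complex.I * (C:ℂ) * (t:ℂ))) t := by
  have h1 : HasDerivAt (fun s : ℝ => (s:ℂ)) 1 t := by
    simpa using (hasDerivAt_id t).ofReal_comp
  have h2 := h1.const_mul (2 * (Real.pi:ℂ) * Complex.I * (C:ℂ))
  have h3 := h2.cexp
  convert h3 using 1
  ring

-- derivative of g(c * ·)
lemma rfls_hasDerivAt_g (q a0 : ℕ) (c t : ℝ) :
    ∃ e : ℂ, HasDerivAt (fun s : ℝ => rflsG q a0 (c * s)) e t ∧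
      ‖e‖ ≤ 2 * Real.pi * q ^ 2 * |c| := by
  classical
  have hfun : (fun s : ℝ => rflsG q a0 (c * s))
      = fun s : ℝ => ∑ j ∈ (Finset.range q).erase a0,
          Complex.exp (2 * Real.pi * Complex.I * (((j:ℝ) * c : ℝ):ℂ) * (s:ℂ)) := by
    funext s
    unfold rflsG
    refine Finset.sum_congr rfl fun j _ => ?_
    congr 1
    push_cast
    ring
  refine ⟨∑ j ∈ (Finset.range q).erase a0,
    2 * Real.pi * Complex.I * (((j:ℝ) * c : ℝ):ℂ) *
      Complex.exp (2 * Real.pi * Complex.I * (((j:ℝ) * c : ℝ):ℂ) * (t:ℂ)), ?_, ?_⟩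
  · rw [hfun]
    exact HasDerivAt.fun_sum fun j _ => rfls_hasDerivAt_exp ((j:ℝ) * c) t
  · calc ‖∑ j ∈ (Finset.range q).erase a0,
        2 * Real.pi * Complex.I * (((j:ℝ) * c : ℝ):ℂ) *
          Complex.exp (2 * Real.pi * Complex.I * (((j:ℝ) * c : ℝ):ℂ) * (t:ℂ))‖
        ≤ ∑ j ∈ (Finset.range q).erase a0,
          ‖2 * Real.pi * Complex.I * (((j:ℝ) * c : ℝ):ℂ) *
            Complex.exp (2 * Real.pi * Complex.I * (((j:ℝ) * c : ℝ):ℂ) * (t:ℂ))‖ :=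
          norm_sum_le _ _
      _ ≤ ∑ j ∈ (Finset.range q).erase a0, 2 * Real.pi * q * |c| := by
          refine Finset.sum_le_sum fun j hj => ?_
          have hj' : j < q := Finset.mem_range.1 (Finset.mem_of_mem_erase hj)
          rw [norm_mul, rfls_exp_norm_one, mul_one, norm_mul, rfls_norm_pi,
            Complex.norm_real, Real.norm_eq_abs, abs_mul, Nat.abs_cast]
          have hjq : (j:ℝ) ≤ q := by exact_mod_cast hj'.le
          have hpi : (0:ℝ) ≤ 2 * Real.pi := by positivity
          nlinarith [mul_nonneg (mul_nonneg hpi (sub_nonneg.2 hjq)) (abs_nonneg c)]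
      _ ≤ q * (2 * Real.pi * q * |c|) := by
          rw [Finset.sum_const, nsmul_eq_mul]
          have hcard : ((Finset.range q).erase a0).card ≤ q := by
            calc ((Finset.range q).erase a0).card ≤ (Finset.range q).card :=
              Finset.card_le_card (Finset.erase_subset _ _)
              _ = q := Finset.card_range q
          have h0 : (0:ℝ) ≤ 2 * Real.pi * q * |c| := by positivity
          have hc : (((Finset.range q).erase a0).card : ℝ) ≤ q := by exact_mod_cast hcard
          nlinarith
      _ = 2 * Real.pi * q ^ 2 * |c| := by ring

lemma rfls_prod_norm_le (q a0 : ℕ) (hq : 3 ≤ q) (ha0 : a0 < q) (k : ℕ) (t : ℝ)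
    (h : ∀ i < k, (q:ℝ)^i * t ≠ (round ((q:ℝ)^i * t) : ℤ)) :
    ‖∏ i ∈ Finset.range k, rflsG q a0 ((q:ℝ)^i * t)‖ ≤ rflsGk q k t := by
  rw [norm_prod]
  exact Finset.prod_le_prod (fun i _ => norm_nonneg _)
    (fun i hi => rfls_norm_g_le_M q a0 ha0 _ (h i (Finset.mem_range.1 hi)))

lemma rfls_hasDerivAt_prod (q a0 : ℕ) (hq : 3 ≤ q) (ha0 : a0 < q) (k : ℕ) (t : ℝ) :
    ∃ d : ℂ, HasDerivAt (fun s : ℝ => ∏ i ∈ Finset.range k, rflsG q a0 ((q:ℝ)^i * s)) d t ∧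
      ((∀ i < k, (q:ℝ)^i * t ≠ (round ((q:ℝ)^i * t) : ℤ)) →
        ‖d‖ ≤ 2 * Real.pi * (q:ℝ)^(k+2) * rflsGk q k t) := by
  induction k with
  | zero =>
    refine ⟨0, ?_, ?_⟩
    · simpa using hasDerivAt_const t (1:ℂ)
    · intro _
      simp [rflsGk]
      positivity
  | succ k ih =>
    obtain ⟨d, hd, hdb⟩ := ih
    obtain ⟨e, he, heb⟩ := rfls_hasDerivAt_g q a0 ((q:ℝ)^k) t
    refine ⟨d * rflsG q a0 ((q:ℝ)^k * t) +
      (∏ i ∈ Finset.range k, rflsG q a0 ((q:ℝ)^i * t)) * e, ?_, ?_⟩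
    · have := hd.fun_mul he
      have hfe : (fun s : ℝ => ∏ i ∈ Finset.range (k+1), rflsG q a0 ((q:ℝ)^i * s))
          = fun s => (∏ i ∈ Finset.range k, rflsG q a0 ((q:ℝ)^i * s)) * rflsG q a0 ((q:ℝ)^k * s) := by
        funext s
        rw [Finset.prod_range_succ]
      rw [hfe]
      exact this
    · intro hirr
      have hirr' : ∀ i < k, (q:ℝ)^i * t ≠ (round ((q:ℝ)^i * t) : ℤ) :=
        fun i hi => hirr i (by omega)
      have h1 : ‖d‖ ≤ 2 * Real.pi * (q:ℝ)^(k+2) * rflsGk q k t := hdb hirr'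
      have h2 : ‖rflsG q a0 ((q:ℝ)^k * t)‖ ≤ rflsM q ((q:ℝ)^k * t) :=
        rfls_norm_g_le_M q a0 ha0 _ (hirr k (by omega))
      have h3 : ‖∏ i ∈ Finset.range k, rflsG q a0 ((q:ℝ)^i * t)‖ ≤ rflsGk q k t :=
        rfls_prod_norm_le q a0 hq ha0 k t hirr'
      have h4 : ‖e‖ ≤ 2 * Real.pi * q ^ 2 * (q:ℝ)^k := by
        rwa [_root_.abs_of_nonneg (by positivity : (0:ℝ) ≤ (q:ℝ)^k)] at heb
      have hM1 : 1 ≤ rflsM q ((q:ℝ)^k * t) := rflsM_one_le q (by omega) _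
      have hG0 : 0 ≤ rflsGk q k t := rflsGk_nonneg q k t
      have hGsucc : rflsGk q (k+1) t = rflsGk q k t * rflsM q ((q:ℝ)^k * t) := by
        unfold rflsGk
        rw [Finset.prod_range_succ]
      have hq2 : (2:ℝ) ≤ q := by
        have : (3:ℝ) ≤ q := by exact_mod_cast hq
        linarith
      have hpi : (0:ℝ) < Real.pi := Real.pi_pos
      calc ‖d * rflsG q a0 ((q:ℝ)^k * t) +
            (∏ i ∈ Finset.range k, rflsG q a0 ((q:ℝ)^i * t)) * e‖
          ≤ ‖d‖ * ‖rflsG q a0 ((q:ℝ)^k * t)‖ +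
            ‖∏ i ∈ Finset.range k, rflsG q a0 ((q:ℝ)^i * t)‖ * ‖e‖ := by
            refine le_trans (norm_add_le _ _) ?_
            rw [norm_mul, norm_mul]
        _ ≤ (2 * Real.pi * (q:ℝ)^(k+2) * rflsGk q k t) * rflsM q ((q:ℝ)^k * t) +
            rflsGk q k t * (2 * Real.pi * (q:ℝ) ^ 2 * (q:ℝ)^k) := by
            have e1 : ‖d‖ * ‖rflsG q a0 ((q:ℝ)^k * t)‖
                ≤ (2 * Real.pi * (q:ℝ)^(k+2) * rflsGk q k t) * rflsM q ((q:ℝ)^k * t) :=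
              mul_le_mul h1 h2 (norm_nonneg _) (by positivity)
            have e2 : ‖∏ i ∈ Finset.range k, rflsG q a0 ((q:ℝ)^i * t)‖ * ‖e‖
                ≤ rflsGk q k t * (2 * Real.pi * (q:ℝ) ^ 2 * (q:ℝ)^k) :=
              mul_le_mul h3 h4 (norm_nonneg _) hG0
            linarith
        _ ≤ 2 * Real.pi * (q:ℝ)^(k+1+2) * rflsGk q (k+1) t := by
            rw [hGsucc]
            set Gg := rflsGk q k t with hGg
            set M := rflsM q ((q:ℝ)^k * t) with hMM
            have hT1 : Gg * (2 * Real.pi * (q:ℝ) ^ 2 * (q:ℝ)^k)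
                ≤ 2 * Real.pi * (q:ℝ)^(k+2) * Gg * M := by
              have h5 : Gg * (2 * Real.pi * (q:ℝ) ^ 2 * (q:ℝ)^k)
                  = (2 * Real.pi * (q:ℝ)^(k+2) * Gg) * 1 := by
                rw [pow_add]; ring
              rw [h5]
              exact mul_le_mul_of_nonneg_left hM1 (by positivity)
            have hpow : (q:ℝ)^(k+1+2) = (q:ℝ) * (q:ℝ)^(k+2) := by
              rw [show k+1+2 = (k+2)+1 by omega, pow_succ]; ring
            have hGM : (0:ℝ) ≤ Gg * M := mul_nonneg hG0 (by linarith)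
            have hz : (0:ℝ) ≤ Real.pi * (q:ℝ)^(k+2) * (Gg * M) := by positivity
            have hfin : 2 * (2 * Real.pi * (q:ℝ)^(k+2) * Gg * M)
                ≤ 2 * Real.pi * (q:ℝ)^(k+1+2) * (Gg * M) := by
              rw [hpow]
              nlinarith [mul_nonneg (sub_nonneg.2 hq2) hz]
            linarith

lemma rfls_hasDerivAt_F (q a0 k : ℕ) (t : ℝ) :
    HasDerivAt (restrictedFourier q a0 k) (rflsD q a0 k t) t := by
  classical
  have hfun : restrictedFourier q a0 k = fun s : ℝ => ∑ n ∈ Finset.range (q ^ k),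
      (if ∀ i < k, n / q ^ i % q ≠ a0 then
        Complex.exp (2 * Real.pi * Complex.I * ((n:ℝ):ℂ) * (s:ℂ)) else 0) := by
    funext s
    unfold restrictedFourier
    refine Finset.sum_congr rfl fun n _ => ?_
    refine if_congr Iff.rfl ?_ rfl
    congr 1
    ring
  have hval : rflsD q a0 k t = ∑ n ∈ Finset.range (q ^ k),
      (if ∀ i < k, n / q ^ i % q ≠ a0 then
        2 * Real.pi * Complex.I * ((n:ℝ):ℂ) *
          Complex.exp (2 * Real.pi * Complex.I * ((n:ℝ):ℂ) * (t:ℂ)) else 0) := by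
    unfold rflsD
    refine Finset.sum_congr rfl fun n _ => ?_
    refine if_congr Iff.rfl ?_ rfl
    congr 1
    ring
  rw [hfun, hval]
  refine HasDerivAt.fun_sum fun n _ => ?_
  by_cases h : ∀ i < k, n / q ^ i % q ≠ a0
  · simp only [if_pos h]
    exact rfls_hasDerivAt_exp (n:ℝ) t
  · simp only [if_neg h]
    exact hasDerivAt_const t 0

lemma rfls_D_norm_le (q a0 : ℕ) (hq : 3 ≤ q) (ha0 : a0 < q) (k : ℕ) (t : ℝ)
    (h : ∀ i < k, (q:ℝ)^i * t ≠ (round ((q:ℝ)^i * t) : ℤ)) :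
    ‖rflsD q a0 k t‖ ≤ 2 * Real.pi * (q:ℝ)^(k+2) * rflsGk q k t := by
  obtain ⟨d, hd, hdb⟩ := rfls_hasDerivAt_prod q a0 hq ha0 k t
  have hF : HasDerivAt (restrictedFourier q a0 k) d t := by
    have hfe : restrictedFourier q a0 k
        = fun s : ℝ => ∏ i ∈ Finset.range k, rflsG q a0 ((q:ℝ)^i * s) :=
      funext fun s => rfls_prod_formula q a0 (by omega) k s
    rw [hfe]
    exact hd
  have : rflsD q a0 k t = d := (rfls_hasDerivAt_F q a0 k t).unique hF
  rw [this]
  exact hdb h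

lemma rfls_continuous_F (q a0 k : ℕ) : Continuous (restrictedFourier q a0 k) := by
  unfold restrictedFourier
  refine continuous_finset_sum _ fun n _ => ?_
  by_cases h : ∀ i < k, n / q ^ i % q ≠ a0
  · simp only [if_pos h]
    fun_prop
  · simp only [if_neg h]
    exact continuous_const

lemma rfls_continuous_D (q a0 k : ℕ) : Continuous (rflsD q a0 k) := by
  unfold rflsD
  refine continuous_finset_sum _ fun n _ => ?_
  by_cases h : ∀ i < k, n / q ^ i % q ≠ a0
  · simp only [if_pos h]
    fun_prop
  · simp only [if_neg h]
    exact continuous_const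

-- Sobolev-type bound
lemma rfls_sobolev {h d : ℝ → ℂ} (hc : Continuous h) (hdc : Continuous d)
    (hder : ∀ t : ℝ, HasDerivAt h (d t) t) {x δ : ℝ} (hδ : 0 < δ) {y : ℝ}
    (hy : y ∈ Set.Icc (x - δ) (x + δ)) :
    ‖h y‖ ≤ (1/(2*δ)) * (∫ s in (x-δ)..(x+δ), ‖h s‖) + ∫ s in (x-δ)..(x+δ), ‖d s‖ := by
  have hab : x - δ ≤ x + δ := by linarith
  have hInt_d : IntervalIntegrable (fun s => ‖d s‖) volume (x-δ) (x+δ) :=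
    (hdc.norm).intervalIntegrable _ _
  have hInt_h : IntervalIntegrable (fun s => ‖h s‖) volume (x-δ) (x+δ) :=
    (hc.norm).intervalIntegrable _ _
  set K := ∫ s in (x-δ)..(x+δ), ‖d s‖ with hK
  have key : ∀ z ∈ Set.Icc (x-δ) (x+δ), ‖h y‖ ≤ ‖h z‖ + K := by
    intro z hz
    have hftc : ∫ s in z..y, d s = h y - h z := by
      apply intervalIntegral.integral_eq_sub_of_hasDerivAt
      · intro s _
        exact hder s
      · exact hdc.intervalIntegrable _ _
    have h1 : ‖h y - h z‖ ≤ K := by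
      rw [← hftc]
      refine le_trans (intervalIntegral.norm_integral_le_abs_integral_norm) ?_
      rcases le_total z y with hzy | hzy
      · rw [_root_.abs_of_nonneg (intervalIntegral.integral_nonneg hzy (fun s _ => norm_nonneg _))]
        exact intervalIntegral.integral_mono_interval hz.1 hzy hy.2
          (Filter.Eventually.of_forall fun s => norm_nonneg _) hInt_d
      · rw [intervalIntegral.integral_symm,
          abs_neg, _root_.abs_of_nonneg (intervalIntegral.integral_nonneg hzy (fun s _ => norm_nonneg _))]
        exact intervalIntegral.integral_mono_interval hy.1 hzy hz.2
          (Filter.Eventually.of_forall fun s => norm_nonneg _) hInt_d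
    calc ‖h y‖ = ‖h z + (h y - h z)‖ := by ring_nf
      _ ≤ ‖h z‖ + ‖h y - h z‖ := norm_add_le _ _
      _ ≤ ‖h z‖ + K := by linarith
  have hint : (2*δ) * ‖h y‖ ≤ (∫ s in (x-δ)..(x+δ), ‖h s‖) + (2*δ) * K := by
    have h2 : ∫ _z in (x-δ)..(x+δ), ‖h y‖ = (2*δ) * ‖h y‖ := by
      rw [intervalIntegral.integral_const]
      rw [smul_eq_mul]
      congr 1
      ring
    have h3 : ∫ z in (x-δ)..(x+δ), (‖h z‖ + K) =
        (∫ s in (x-δ)..(x+δ), ‖h s‖) + (2*δ) * K := by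
      rw [intervalIntegral.integral_add hInt_h (intervalIntegrable_const)]
      congr 1
      rw [intervalIntegral.integral_const, smul_eq_mul]
      ring
    have h4 := intervalIntegral.integral_mono_on hab
      (intervalIntegrable_const) (hInt_h.add intervalIntegrable_const) key
    rw [h2, h3] at h4
    exact h4
  have h2δ : (0:ℝ) < 2*δ := by linarith
  have h5 := mul_le_mul_of_nonneg_left hint (le_of_lt (by positivity : (0:ℝ) < 1/(2*δ)))
  have e1 : (1/(2*δ)) * (2 * δ * ‖h y‖) = ‖h y‖ := by field_simp
  have e2 : (1/(2*δ)) * ((∫ s in (x-δ)..(x+δ), ‖h s‖) + 2 * δ * K)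
      = (1/(2*δ)) * (∫ s in (x-δ)..(x+δ), ‖h s‖) + K := by field_simp
  rw [e1, e2] at h5
  exact h5

-- a.e. irrationality
lemma rfls_ae_irr (q : ℕ) (hq : 1 ≤ q) :
    ∀ᵐ t : ℝ, ∀ i : ℕ, (q:ℝ)^i * t ≠ (round ((q:ℝ)^i * t) : ℤ) := by
  rw [MeasureTheory.ae_all_iff]
  intro i
  have hsub : {t : ℝ | ¬ (q:ℝ)^i * t ≠ (round ((q:ℝ)^i * t) : ℤ)}
      ⊆ Set.range (fun m : ℤ => (m:ℝ) / (q:ℝ)^i) := by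
    intro t ht
    simp only [Set.mem_setOf_eq, not_not] at ht
    refine ⟨round ((q:ℝ)^i * t), ?_⟩
    have hqi : ((q:ℝ)^i) ≠ 0 := by positivity
    field_simp
    linarith [ht]
  exact measure_mono_null hsub ((Set.countable_range _).measure_zero _)

-- measurability of Gk
lemma rfls_measurable_Gk (q k : ℕ) : Measurable (rflsGk q k) := by
  apply Finset.measurable_prod
  intro i _
  have hround : Measurable (fun u : ℝ => ((round u : ℤ) : ℝ)) := by
    have hmono : Monotone (fun u : ℝ => ((round u : ℤ) : ℝ)) := by
      intro a b hab
      have : round a ≤ round b := by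
        rw [round_eq, round_eq]
        exact Int.floor_mono (by linarith)
      show ((round a : ℤ) : ℝ) ≤ ((round b : ℤ) : ℝ)
      exact_mod_cast this
    exact hmono.measurable
  have h1 : Measurable (fun t : ℝ => (q:ℝ)^i * t) := (measurable_id.const_mul _)
  have h2 : Measurable (fun t : ℝ => rflsM q ((q:ℝ)^i * t)) := by
    unfold rflsM
    apply Measurable.min measurable_const
    apply Measurable.add measurable_const
    apply Measurable.div measurable_const
    apply Measurable.const_mul
    apply Measurable.abs
    exact h1.sub (hround.comp h1)
  exact h2

lemma rfls_integrableOn_Gk (q k : ℕ) (a b : ℝ) :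
    MeasureTheory.IntegrableOn (rflsGk q k) (Set.Ioc a b) := by
  apply MeasureTheory.Integrable.mono' (g := fun _ => (q:ℝ)^k)
  · exact MeasureTheory.integrableOn_const measure_Ioc_lt_top.ne
  · exact ((rfls_measurable_Gk q k).aestronglyMeasurable).restrict
  · refine Filter.Eventually.of_forall fun t => ?_
    rw [Real.norm_eq_abs, _root_.abs_of_nonneg (rflsGk_nonneg q k t)]
    exact rflsGk_le q k t

-- periodicity
lemma rfls_periodic_Gk (q k : ℕ) : Function.Periodic (rflsGk q k) 1 := by
  intro t
  unfold rflsGk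
  refine Finset.prod_congr rfl fun i _ => ?_
  unfold rflsM
  have h1 : (q:ℝ)^i * (t + 1) = (q:ℝ)^i * t + (q^i : ℕ) := by push_cast; ring
  rw [h1, round_add_natCast]
  push_cast
  congr 2
  ring

lemma rfls_gap {D d ℓ d' ℓ' : ℕ} (hD : 1 ≤ D)
    (hd : d ∈ Finset.Ico D (2*D)) (hd' : d' ∈ Finset.Ico D (2*D))
    (hl : ℓ ∈ (Finset.Ioo 0 d).filter (fun ℓ => Nat.Coprime ℓ d))
    (hl' : ℓ' ∈ (Finset.Ioo 0 d').filter (fun ℓ => Nat.Coprime ℓ d'))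
    (hne : ¬ (d = d' ∧ ℓ = ℓ')) :
    1/(4*(D:ℝ)^2) ≤ |(ℓ:ℝ)/d - (ℓ':ℝ)/d'| := by
  simp only [Finset.mem_Ico] at hd hd'
  simp only [Finset.mem_filter, Finset.mem_Ioo] at hl hl'
  obtain ⟨⟨hl0, hld⟩, hcop⟩ := hl
  obtain ⟨⟨hl0', hld'⟩, hcop'⟩ := hl'
  have hd0 : 0 < d := by omega
  have hd0' : 0 < d' := by omega
  have hkey : ℓ * d' ≠ ℓ' * d := by
    intro heq
    apply hne
    have h1 : d ∣ d' := by
      have : d ∣ ℓ * d' := ⟨ℓ', by linarith [heq]⟩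
      exact (Nat.Coprime.dvd_of_dvd_mul_left (Nat.Coprime.symm hcop) this)
    have h2 : d' ∣ d := by
      have : d' ∣ ℓ' * d := ⟨ℓ, by linarith [heq]⟩
      exact (Nat.Coprime.dvd_of_dvd_mul_left (Nat.Coprime.symm hcop') this)
    have hdd : d = d' := Nat.dvd_antisymm h1 h2
    refine ⟨hdd, ?_⟩
    subst hdd
    exact Nat.eq_of_mul_eq_mul_right hd0 heq
  have hnum : (1:ℝ) ≤ |(ℓ:ℝ) * d' - (ℓ':ℝ) * d| := by
    have : ((ℓ * d' : ℕ) : ℤ) ≠ ((ℓ' * d : ℕ) : ℤ) := by exact_mod_cast hkey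
    have h1 : 1 ≤ |((ℓ * d' : ℕ) : ℤ) - ((ℓ' * d : ℕ) : ℤ)| :=
      Int.one_le_abs (sub_ne_zero.2 this)
    have h2 : |(((ℓ * d' : ℕ) : ℤ) : ℝ) - (((ℓ' * d : ℕ) : ℤ) : ℝ)|
        = |(ℓ:ℝ) * d' - (ℓ':ℝ) * d| := by push_cast; ring_nf
    calc (1:ℝ) ≤ |((((ℓ * d' : ℕ) : ℤ) - ((ℓ' * d : ℕ) : ℤ) : ℤ) : ℝ)| := by exact_mod_cast h1
      _ = |(ℓ:ℝ) * d' - (ℓ':ℝ) * d| := by push_cast; ring_nf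
  have hdr : (0:ℝ) < (d:ℝ) := by exact_mod_cast hd0
  have hdr' : (0:ℝ) < (d':ℝ) := by exact_mod_cast hd0'
  have heq : (ℓ:ℝ)/d - (ℓ':ℝ)/d' = ((ℓ:ℝ) * d' - (ℓ':ℝ) * d) / ((d:ℝ) * d') := by
    field_simp
  rw [heq, abs_div, _root_.abs_of_nonneg (by positivity : (0:ℝ) ≤ (d:ℝ) * d')]
  have hdd4 : (d:ℝ) * d' ≤ 4 * (D:ℝ)^2 := by
    have h1 : (d:ℝ) ≤ 2*D := by exact_mod_cast (hd.2.le)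
    have h2 : (d':ℝ) ≤ 2*D := by exact_mod_cast (hd'.2.le)
    nlinarith
  rw [div_le_div_iff₀ (by positivity) (by positivity)]
  nlinarith [hnum, hdd4, abs_nonneg ((ℓ:ℝ) * d' - (ℓ':ℝ) * d)]

lemma rfls_pair_bound (q a0 : ℕ) (hq : 3 ≤ q) (ha0 : a0 < q) (k : ℕ) (x δ : ℝ)
    (hδ : 0 < δ) :
    (⨆ ε ∈ Set.Ioo (-δ) δ, ‖restrictedFourier q a0 k (x + ε)‖)
      ≤ (1/(2*δ) + 2*Real.pi*(q:ℝ)^(k+2)) * ∫ t in Set.Ioc (x-δ) (x+δ), rflsGk q k t := by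
  have hab : x - δ ≤ x + δ := by linarith
  set A := ∫ t in Set.Ioc (x-δ) (x+δ), rflsGk q k t with hA
  have hA0 : 0 ≤ A :=
    setIntegral_nonneg measurableSet_Ioc (fun t _ => rflsGk_nonneg q k t)
  have hc0 : (0:ℝ) ≤ 1/(2*δ) + 2*Real.pi*(q:ℝ)^(k+2) := by positivity
  have hRHS0 : (0:ℝ) ≤ (1/(2*δ) + 2*Real.pi*(q:ℝ)^(k+2)) * A := mul_nonneg hc0 hA0
  have hae := rfls_ae_irr q (by omega)
  have hFG : ∀ᵐ t : ℝ, ‖restrictedFourier q a0 k t‖ ≤ rflsGk q k t := by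
    refine hae.mono fun t ht => ?_
    rw [rfls_prod_formula q a0 (by omega) k t]
    exact rfls_prod_norm_le q a0 hq ha0 k t (fun i _ => ht i)
  have hDG : ∀ᵐ t : ℝ, ‖rflsD q a0 k t‖ ≤ 2 * Real.pi * (q:ℝ)^(k+2) * rflsGk q k t := by
    refine hae.mono fun t ht => ?_
    exact rfls_D_norm_le q a0 hq ha0 k t (fun i _ => ht i)
  have hI1 : (∫ s in (x-δ)..(x+δ), ‖restrictedFourier q a0 k s‖) ≤ A := by
    rw [intervalIntegral.integral_of_le hab, hA]
    refine setIntegral_mono_ae ?_ ?_ hFG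
    · exact ((rfls_continuous_F q a0 k).norm.integrableOn_Ioc)
    · exact rfls_integrableOn_Gk q k _ _
  have hI2 : (∫ s in (x-δ)..(x+δ), ‖rflsD q a0 k s‖)
      ≤ 2 * Real.pi * (q:ℝ)^(k+2) * A := by
    rw [intervalIntegral.integral_of_le hab, hA]
    have h1 : (∫ s in Set.Ioc (x-δ) (x+δ), ‖rflsD q a0 k s‖)
        ≤ ∫ s in Set.Ioc (x-δ) (x+δ), 2 * Real.pi * (q:ℝ)^(k+2) * rflsGk q k s := by
      refine setIntegral_mono_ae ?_ ?_ hDG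
      · exact ((rfls_continuous_D q a0 k).norm.integrableOn_Ioc)
      · exact (rfls_integrableOn_Gk q k _ _).const_mul _
    rwa [MeasureTheory.integral_const_mul] at h1
  refine Real.iSup_le (fun ε => Real.iSup_le (fun hε => ?_) hRHS0) hRHS0
  obtain ⟨hε1, hε2⟩ := Set.mem_Ioo.1 hε
  have hy : x + ε ∈ Set.Icc (x - δ) (x + δ) := ⟨by linarith, by linarith⟩
  calc ‖restrictedFourier q a0 k (x + ε)‖
      ≤ (1/(2*δ)) * (∫ s in (x-δ)..(x+δ), ‖restrictedFourier q a0 k s‖)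
        + ∫ s in (x-δ)..(x+δ), ‖rflsD q a0 k s‖ :=
        rfls_sobolev (rfls_continuous_F q a0 k) (rfls_continuous_D q a0 k)
          (rfls_hasDerivAt_F q a0 k) hδ hy
    _ ≤ (1/(2*δ)) * A + 2 * Real.pi * (q:ℝ)^(k+2) * A := by
        have := mul_le_mul_of_nonneg_left hI1 (by positivity : (0:ℝ) ≤ 1/(2*δ))
        linarith
    _ = (1/(2*δ) + 2*Real.pi*(q:ℝ)^(k+2)) * A := by ring

/-- Large sieve type estimate: assuming the L¹ bound
`∫₀¹ ∏_{i<k} min(q, 1 + 1/(2‖q^i t‖)) dt ≪ (C_q log q)^k`, for all `θ ∈ ℝ` and `D ≥ 1`,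
`∑_{D ≤ d < 2D} ∑_{0 < ℓ < d, (ℓ,d)=1} sup_{|ε|<1/(10D²)} |F̂_{q^k}(ℓ/d + θ + ε)|
  ≪_q (D² + q^k)(C_q log q)^k`. -/
theorem restricted_fourier_large_sieve (q a0 : ℕ) (hq : 3 ≤ q) (ha0 : a0 < q)
    (Cq : ℝ) (hCq : 0 < Cq)
    (hL1 : ∃ C1 > 0, ∀ k : ℕ,
      (∫ t in (0:ℝ)..1, ∏ i ∈ Finset.range k,
          min (q : ℝ) (1 + 1 / (2 * |(q : ℝ) ^ i * t - round ((q : ℝ) ^ i * t)|)))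
        ≤ C1 * (Cq * Real.log q) ^ k) :
    ∃ C > 0, ∀ (k D : ℕ) (θ : ℝ), 1 ≤ D →
      ∑ d ∈ Finset.Ico D (2 * D),
          ∑ ℓ ∈ (Finset.Ioo 0 d).filter (fun ℓ => Nat.Coprime ℓ d),
            ⨆ ε ∈ Set.Ioo (-(1 / (10 * (D : ℝ) ^ 2))) (1 / (10 * (D : ℝ) ^ 2)),
              ‖restrictedFourier q a0 k ((ℓ : ℝ) / d + θ + ε)‖
        ≤ C * ((D : ℝ) ^ 2 + (q : ℝ) ^ k) * (Cq * Real.log q) ^ k := by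
  classical
  obtain ⟨C1, hC1pos, hC1⟩ := hL1
  refine ⟨21 * C1 * (q:ℝ)^2, by positivity, ?_⟩
  intro k D θ hD
  have hq1 : (1:ℝ) < q := by exact_mod_cast (by omega : 1 < q)
  have ha_pos : 0 < Cq * Real.log q := mul_pos hCq (Real.log_pos hq1)
  set a : ℝ := Cq * Real.log q with hadef
  set δ : ℝ := 1 / (10 * (D:ℝ)^2) with hδdef
  have hD1 : (1:ℝ) ≤ D := by exact_mod_cast hD
  have hδpos : 0 < δ := by rw [hδdef]; positivity
  have hδ10 : δ ≤ 1/10 := by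
    rw [hδdef]
    rw [div_le_div_iff₀ (by positivity) (by norm_num)]
    nlinarith
  -- L1 bound in rflsGk form
  have hL1k : (∫ t in (0:ℝ)..1, rflsGk q k t) ≤ C1 * a ^ k := by
    have h := hC1 k
    simpa only [rflsGk, rflsM] using h
  -- integral over big interval
  have hIok : ∀ u v : ℝ, IntervalIntegrable (rflsGk q k) volume u v := by
    intro u v
    rw [intervalIntegrable_iff]
    exact rfls_integrableOn_Gk q k _ _
  have hper := rfls_periodic_Gk q k
  have hbig : (∫ t in Set.Ioc (θ-1) (θ+2), rflsGk q k t) ≤ 3 * (C1 * a ^ k) := by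
    have hsplit : (∫ t in (θ-1)..(θ+2), rflsGk q k t)
        = (∫ t in (θ-1)..θ, rflsGk q k t) + (∫ t in θ..(θ+1), rflsGk q k t)
          + (∫ t in (θ+1)..(θ+2), rflsGk q k t) := by
      rw [intervalIntegral.integral_add_adjacent_intervals (hIok _ _) (hIok _ _),
        intervalIntegral.integral_add_adjacent_intervals (hIok _ _) (hIok _ _)]
    have hp1 : (∫ t in (θ-1)..θ, rflsGk q k t) = ∫ t in (0:ℝ)..1, rflsGk q k t := by
      have h := hper.intervalIntegral_add_eq (θ-1) 0
      simpa only [show θ - 1 + 1 = θ by ring, zero_add] using h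
    have hp2 : (∫ t in θ..(θ+1), rflsGk q k t) = ∫ t in (0:ℝ)..1, rflsGk q k t := by
      have h := hper.intervalIntegral_add_eq θ 0
      simpa only [zero_add] using h
    have hp3 : (∫ t in (θ+1)..(θ+2), rflsGk q k t) = ∫ t in (0:ℝ)..1, rflsGk q k t := by
      have h := hper.intervalIntegral_add_eq (θ+1) 0
      simpa only [show θ + 1 + 1 = θ + 2 by ring, zero_add] using h
    have : (∫ t in (θ-1)..(θ+2), rflsGk q k t) = 3 * ∫ t in (0:ℝ)..1, rflsGk q k t := by
      rw [hsplit, hp1, hp2, hp3]; ring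
    have hset : (∫ t in Set.Ioc (θ-1) (θ+2), rflsGk q k t)
        = ∫ t in (θ-1)..(θ+2), rflsGk q k t := by
      rw [intervalIntegral.integral_of_le (by linarith)]
    rw [hset, this]
    linarith
  -- the family of intervals
  set T := (Finset.Ico D (2*D)).sigma
    (fun d => (Finset.Ioo 0 d).filter (fun ℓ => Nat.Coprime ℓ d)) with hT
  set Sset : (Σ _ : ℕ, ℕ) → Set ℝ :=
    fun p => Set.Ioc ((p.2:ℝ)/p.1 + θ - δ) ((p.2:ℝ)/p.1 + θ + δ) with hSset
  have hdisj : (↑T : Set (Σ _ : ℕ, ℕ)).Pairwise (Function.onFun Disjoint Sset) := by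
    intro p hp p' hp' hne
    obtain ⟨d, ℓ⟩ := p
    obtain ⟨d', ℓ'⟩ := p'
    simp only [Finset.coe_sigma, Set.mem_sigma_iff, Finset.mem_coe, hT,
      Finset.mem_sigma] at hp hp'
    have hne' : ¬ (d = d' ∧ ℓ = ℓ') := by
      rintro ⟨rfl, rfl⟩
      exact hne rfl
    have hgap := rfls_gap hD hp.1 hp'.1 hp.2 hp'.2 hne'
    have h2δ : 2 * δ ≤ 1/(4*(D:ℝ)^2) := by
      rw [hδdef, mul_one_div, div_le_div_iff₀ (by positivity) (by positivity)]
      nlinarith [sq_nonneg ((D:ℝ))]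
    simp only [Function.onFun, hSset]
    rw [Set.Ioc_disjoint_Ioc]
    rcases abs_cases ((ℓ:ℝ)/d - (ℓ':ℝ)/d') with ⟨habs, _⟩ | ⟨habs, _⟩
    · rw [habs] at hgap
      refine le_trans (min_le_right _ _) (le_trans ?_ (le_max_left _ _))
      linarith
    · rw [habs] at hgap
      refine le_trans (min_le_left _ _) (le_trans ?_ (le_max_right _ _))
      linarith
  have hunion := MeasureTheory.integral_biUnion_finset T
    (f := rflsGk q k) (μ := volume)
    (fun _ _ => measurableSet_Ioc)
    hdisj
    (fun p _ => rfls_integrableOn_Gk q k _ _)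
  have hsub : (⋃ p ∈ T, Sset p) ⊆ Set.Ioc (θ-1) (θ+2) := by
    intro z hz
    simp only [Set.mem_iUnion] at hz
    obtain ⟨p, hpT, hpz⟩ := hz
    obtain ⟨d, ℓ⟩ := p
    simp only [hT, Finset.mem_sigma, Finset.mem_filter, Finset.mem_Ioo,
      Finset.mem_Ico] at hpT
    obtain ⟨⟨hDd, hd2⟩, ⟨hl0, hld⟩, _⟩ := hpT
    simp only [hSset, Set.mem_Ioc] at hpz
    have hd0 : (0:ℝ) < d := by exact_mod_cast (by omega : 0 < d)
    have hfrac0 : (0:ℝ) ≤ (ℓ:ℝ)/d := by positivity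
    have hfrac1 : (ℓ:ℝ)/d ≤ 1 := by
      rw [div_le_one hd0]
      exact_mod_cast hld.le
    simp only [Set.mem_Ioc]
    constructor
    · calc θ - 1 < (ℓ:ℝ)/d + θ - δ := by linarith
        _ < z := hpz.1
    · calc z ≤ (ℓ:ℝ)/d + θ + δ := hpz.2
        _ ≤ θ + 2 := by linarith
  have hsum_le : ∑ p ∈ T, (∫ t in Sset p, rflsGk q k t)
      ≤ ∫ t in Set.Ioc (θ-1) (θ+2), rflsGk q k t := by
    rw [← hunion]
    refine setIntegral_mono_set (rfls_integrableOn_Gk q k _ _)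
      (Filter.Eventually.of_forall fun t => rflsGk_nonneg q k t)
      (HasSubset.Subset.eventuallyLE hsub)
  set c : ℝ := 1/(2*δ) + 2*Real.pi*(q:ℝ)^(k+2) with hc
  have hc0 : 0 ≤ c := by rw [hc]; positivity
  calc ∑ d ∈ Finset.Ico D (2 * D),
        ∑ ℓ ∈ (Finset.Ioo 0 d).filter (fun ℓ => Nat.Coprime ℓ d),
          ⨆ ε ∈ Set.Ioo (-δ) δ, ‖restrictedFourier q a0 k ((ℓ : ℝ) / d + θ + ε)‖
      ≤ ∑ d ∈ Finset.Ico D (2 * D),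
        ∑ ℓ ∈ (Finset.Ioo 0 d).filter (fun ℓ => Nat.Coprime ℓ d),
          c * ∫ t in Set.Ioc ((ℓ:ℝ)/d + θ - δ) ((ℓ:ℝ)/d + θ + δ), rflsGk q k t := by
        refine Finset.sum_le_sum fun d _ => Finset.sum_le_sum fun ℓ _ => ?_
        exact rfls_pair_bound q a0 hq ha0 k ((ℓ:ℝ)/d + θ) δ hδpos
    _ = c * ∑ p ∈ T, (∫ t in Sset p, rflsGk q k t) := by
        rw [Finset.mul_sum, hT]
        exact (Finset.sum_sigma _ _ (fun p => c * ∫ t in Sset p, rflsGk q k t)).symm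
    _ ≤ c * ∫ t in Set.Ioc (θ-1) (θ+2), rflsGk q k t :=
        mul_le_mul_of_nonneg_left hsum_le hc0
    _ ≤ c * (3 * (C1 * a ^ k)) := mul_le_mul_of_nonneg_left hbig hc0
    _ ≤ 21 * C1 * (q:ℝ)^2 * ((D:ℝ)^2 + (q:ℝ)^k) * a ^ k := by
        have hdelta : 1/(2*δ) = 5 * (D:ℝ)^2 := by
          rw [hδdef]
          field_simp
          ring
        have hq2 : (1:ℝ) ≤ (q:ℝ)^2 := by nlinarith
        have hpi : Real.pi < 3.15 := Real.pi_lt_d2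
        have hpi0 : 0 < Real.pi := Real.pi_pos
        have hqk0 : (0:ℝ) < (q:ℝ)^k := by positivity
        have hak : (0:ℝ) ≤ a ^ k := le_of_lt (pow_pos ha_pos k)
        have hcb : c ≤ 7 * (q:ℝ)^2 * ((D:ℝ)^2 + (q:ℝ)^k) := by
          rw [hc, hdelta]
          have hpow : (q:ℝ)^(k+2) = (q:ℝ)^2 * (q:ℝ)^k := by
            rw [pow_add]; ring
          rw [hpow]
          have hq20 : (0:ℝ) < (q:ℝ)^2 := by positivity
          have e1' := mul_le_mul_of_nonneg_right hq2 (sq_nonneg ((D:ℝ)))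
          have h2pi : 2*Real.pi ≤ 7 := by linarith
          have e2' := mul_le_mul_of_nonneg_right h2pi
            (le_of_lt (mul_pos hq20 hqk0))
          nlinarith [e1', e2']
        have hC1ak : 0 ≤ C1 * a ^ k := mul_nonneg hC1pos.le hak
        calc c * (3 * (C1 * a ^ k)) ≤ (7 * (q:ℝ)^2 * ((D:ℝ)^2 + (q:ℝ)^k)) * (3 * (C1 * a ^ k)) := by
              refine mul_le_mul_of_nonneg_right hcb (by linarith)
          _ = 21 * C1 * (q:ℝ)^2 * ((D:ℝ)^2 + (q:ℝ)^k) * a ^ k := by ring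
end
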